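/- arXiv:1608.03245 — 12 statements merged into one kernel-verified Lean document; each statement's English description precedes it below -/
import Mathlib

section
/- For any positive integer d, there do not exist two finitely supported random variables X and Y taking values in ℝ^d (equivalently, two finitely supported probability distributions on ℝ^d) such that both E_{x₁,x₂∼X}[‖x₁−x₂‖₁] > E_{x∼X, y∼Y}[‖x−y‖₁] and E_{y₁,y₂∼Y}[‖y₁−y₂‖₁] > E_{x∼X, y∼Y}[‖x−y‖₁], where in each expectation the samples are drawn independently. -/
open Finset MeasureTheory


noncomputable def stepf (a t : ℝ) : ℝ := if a ≤ t then 1 else 0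

lemma step_sq (a b : ℝ) :
    (fun t => (stepf a t - stepf b t)^2)
      = Set.indicator (Set.Ico (min a b) (max a b)) (fun _ => (1:ℝ)) := by
  funext t
  by_cases h1 : a ≤ t <;> by_cases h2 : b ≤ t <;>
    simp [stepf, h1, h2, Set.indicator, Set.mem_Ico, min_le_iff, lt_max_iff, not_le] <;>
    first
      | rw [if_neg (by push_neg; exact ⟨h1, h2⟩)]
      | rw [if_pos (Or.inr (not_le.1 h2))]
      | rw [if_pos (Or.inl (not_le.1 h1))]

lemma abs_eq_integral (a b : ℝ) :
    |a - b| = ∫ t, (stepf a t - stepf b t)^2 := by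
  rw [step_sq, MeasureTheory.integral_indicator_const _ measurableSet_Ico]
  simp [Real.volume_Ico,
    ENNReal.toReal_ofReal (by simp [sub_nonneg, min_le_max] : (0:ℝ) ≤ max a b - min a b),
    max_sub_min_eq_abs, abs_sub_comm]

lemma step_integrable (a b : ℝ) :
    Integrable (fun t => (stepf a t - stepf b t)^2) := by
  rw [step_sq, integrable_indicator_iff measurableSet_Ico]
  exact integrableOn_const measure_Ico_lt_top.ne

lemma neg_type {α : Type*} (T : Finset α) (c : α → ℝ) (hc : ∑ a ∈ T, c a = 0)
    (f : α → ℝ) :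
    ∑ a ∈ T, ∑ b ∈ T, c a * c b * |f a - f b| ≤ 0 := by
  have h1 : ∀ a b : α, c a * c b * |f a - f b|
      = ∫ t, c a * c b * (stepf (f a) t - stepf (f b) t)^2 := by
    intro a b
    rw [abs_eq_integral, ← MeasureTheory.integral_const_mul]
  calc ∑ a ∈ T, ∑ b ∈ T, c a * c b * |f a - f b|
      = ∫ t, ∑ a ∈ T, ∑ b ∈ T, c a * c b * (stepf (f a) t - stepf (f b) t)^2 := by
        rw [MeasureTheory.integral_finset_sum _
          (fun a _ => integrable_finset_sum _
            (fun b _ => ((step_integrable (f a) (f b)).const_mul _)))]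
        refine Finset.sum_congr rfl fun a _ => ?_
        rw [MeasureTheory.integral_finset_sum _
          (fun b _ => (step_integrable (f a) (f b)).const_mul _)]
        exact Finset.sum_congr rfl fun b _ => h1 a b
    _ ≤ 0 := by
        apply integral_nonpos
        intro t
        set v : α → ℝ := fun a => stepf (f a) t with hv
        have e1 : ∑ a ∈ T, ∑ b ∈ T, c a * c b * (v a - v b)^2
            = (∑ a ∈ T, c a * v a^2) * (∑ b ∈ T, c b)
              - (∑ a ∈ T, 2 * (c a * v a)) * (∑ b ∈ T, c b * v b)
              + (∑ a ∈ T, c a) * (∑ b ∈ T, c b * v b^2) := by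
          rw [Finset.sum_mul_sum, Finset.sum_mul_sum, Finset.sum_mul_sum,
            ← Finset.sum_sub_distrib, ← Finset.sum_add_distrib]
          refine Finset.sum_congr rfl fun a _ => ?_
          rw [← Finset.sum_sub_distrib, ← Finset.sum_add_distrib]
          exact Finset.sum_congr rfl fun b _ => by ring
        show ∑ a ∈ T, ∑ b ∈ T, c a * c b * (v a - v b)^2 ≤ 0
        rw [e1, hc]
        have : (∑ a ∈ T, 2 * (c a * v a)) = 2 * ∑ a ∈ T, c a * v a := by
          rw [Finset.mul_sum]
        rw [this]
        nlinarith [sq_nonneg (∑ a ∈ T, c a * v a)]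

lemma restrict_sum {α : Type*} [DecidableEq α] {S1 S2 S : Finset α}
    (h1 : S1 ⊆ S) (h2 : S2 ⊆ S) (w1 w2 : α → ℝ) (D : α → α → ℝ) :
    ∑ a ∈ S, ∑ b ∈ S, (if a ∈ S1 then w1 a else 0) * (if b ∈ S2 then w2 b else 0) * D a b
      = ∑ a ∈ S1, ∑ b ∈ S2, w1 a * w2 b * D a b := by
  rw [← Finset.sum_subset h1 (fun x _ hx => by simp [hx])]
  refine Finset.sum_congr rfl fun a ha => ?_
  rw [← Finset.sum_subset h2 (fun x _ hx => by simp [hx])]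
  refine Finset.sum_congr rfl fun b hb => by rw [if_pos ha, if_pos hb]

/-- For any positive integer `d`, there are no two finitely supported probability
distributions on `ℝ^d` such that the expected inner `ℓ1`-distance of each distribution
strictly exceeds the expected crossing `ℓ1`-distance. -/
theorem no_L1_distribution (d : ℕ) (hd : 0 < d) :
    ¬ ∃ (SX SY : Finset (Fin d → ℝ)) (wX wY : (Fin d → ℝ) → ℝ),
      (∀ x ∈ SX, 0 ≤ wX x) ∧ (∀ y ∈ SY, 0 ≤ wY y) ∧
      (∑ x ∈ SX, wX x) = 1 ∧ (∑ y ∈ SY, wY y) = 1 ∧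
      (∑ x₁ ∈ SX, ∑ x₂ ∈ SX, wX x₁ * wX x₂ * (∑ i, |x₁ i - x₂ i|)) >
        (∑ x ∈ SX, ∑ y ∈ SY, wX x * wY y * (∑ i, |x i - y i|)) ∧
      (∑ y₁ ∈ SY, ∑ y₂ ∈ SY, wY y₁ * wY y₂ * (∑ i, |y₁ i - y₂ i|)) >
        (∑ x ∈ SX, ∑ y ∈ SY, wX x * wY y * (∑ i, |x i - y i|)) := by
  rintro ⟨SX, SY, wX, wY, hwX, hwY, hX1, hY1, hXX, hYY⟩
  classical
  set D : (Fin d → ℝ) → (Fin d → ℝ) → ℝ := fun a b => ∑ i, |a i - b i| with hD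
  set S := SX ∪ SY with hS
  set c : (Fin d → ℝ) → ℝ :=
    fun x => (if x ∈ SX then wX x else 0) - (if x ∈ SY then wY x else 0) with hcdef
  have hc : ∑ a ∈ S, c a = 0 := by
    rw [Finset.sum_sub_distrib, Finset.sum_ite_mem, Finset.sum_ite_mem,
      Finset.union_inter_cancel_left, Finset.union_inter_cancel_right, hX1, hY1, sub_self]
  -- negative-type inequality summed over coordinates
  have hneg : ∑ a ∈ S, ∑ b ∈ S, c a * c b * D a b ≤ 0 := by
    have h1 : ∀ a b, c a * c b * D a b = ∑ i, c a * c b * |a i - b i| :=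
      fun a b => Finset.mul_sum _ _ _
    simp_rw [h1]
    have h2 : ∑ a ∈ S, ∑ b ∈ S, ∑ i, c a * c b * |a i - b i|
        = ∑ i, ∑ a ∈ S, ∑ b ∈ S, c a * c b * |a i - b i| := by
      rw [show (∑ a ∈ S, ∑ b ∈ S, ∑ i, c a * c b * |a i - b i|)
          = ∑ a ∈ S, ∑ i, ∑ b ∈ S, c a * c b * |a i - b i| from
        Finset.sum_congr rfl fun a _ => Finset.sum_comm]
      exact Finset.sum_comm
    rw [h2]
    exact Finset.sum_nonpos fun i _ => neg_type S c hc (fun x => x i)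
  -- expand
  have split : ∀ a b, c a * c b * D a b =
      (if a ∈ SX then wX a else 0) * (if b ∈ SX then wX b else 0) * D a b
      - (if a ∈ SX then wX a else 0) * (if b ∈ SY then wY b else 0) * D a b
      - (if a ∈ SY then wY a else 0) * (if b ∈ SX then wX b else 0) * D a b
      + (if a ∈ SY then wY a else 0) * (if b ∈ SY then wY b else 0) * D a b := by
    intro a b; simp only [hcdef]; ring
  simp_rw [split, Finset.sum_add_distrib, Finset.sum_sub_distrib] at hneg
  rw [restrict_sum Finset.subset_union_left Finset.subset_union_left,
    restrict_sum Finset.subset_union_left Finset.subset_union_right,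
    restrict_sum Finset.subset_union_right Finset.subset_union_left,
    restrict_sum Finset.subset_union_right Finset.subset_union_right] at hneg
  have hYX : ∑ a ∈ SY, ∑ b ∈ SX, wY a * wX b * D a b
      = ∑ a ∈ SX, ∑ b ∈ SY, wX a * wY b * D a b := by
    rw [Finset.sum_comm]
    refine Finset.sum_congr rfl fun a _ => Finset.sum_congr rfl fun b _ => ?_
    have : D b a = D a b := Finset.sum_congr rfl fun i _ => abs_sub_comm _ _
    rw [this]; ring
  rw [hYX] at hneg
  simp only [hD] at hneg hXX hYY
  linarith
end

section
/- There do not exist two finitely supported real-valued random variables X and Y (equivalently, two finitely supported probability distributions on ℝ) such that both E_{x₁,x₂∼X}[|x₁−x₂|] > E_{x∼X, y∼Y}[|x−y|] and E_{y₁,y₂∼Y}[|y₁−y₂|] > E_{x∼X, y∼Y}[|x−y|], where in each expectation the samples are drawn independently. -/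
open Finset

lemma expand_insert (m : ℝ) (T : Finset ℝ) (hm : m ∉ T) (hle : ∀ a ∈ T, a ≤ m)
    (g : ℝ → ℝ) :
    ∑ a ∈ insert m T, ∑ b ∈ insert m T, g a * g b * |a - b|
      = (∑ a ∈ T, ∑ b ∈ T, g a * g b * |a - b|)
        + 2 * g m * ∑ a ∈ T, g a * (m - a) := by
  rw [Finset.sum_insert hm]
  have h1 : ∑ b ∈ insert m T, g m * g b * |m - b|
      = ∑ b ∈ T, g m * g b * (m - b) := by
    rw [Finset.sum_insert hm]
    simp only [sub_self, abs_zero, mul_zero, zero_add]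
    refine Finset.sum_congr rfl fun b hb => ?_
    rw [abs_of_nonneg (sub_nonneg.mpr (hle b hb))]
  have h2 : ∀ a ∈ T, ∑ b ∈ insert m T, g a * g b * |a - b|
      = g a * g m * (m - a) + ∑ b ∈ T, g a * g b * |a - b| := by
    intro a ha
    rw [Finset.sum_insert hm, abs_sub_comm, abs_of_nonneg (sub_nonneg.mpr (hle a ha))]
  rw [h1, Finset.sum_congr rfl h2, Finset.sum_add_distrib, Finset.mul_sum]
  have h3 : (∑ b ∈ T, g m * g b * (m - b)) + ∑ a ∈ T, g a * g m * (m - a)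
      = ∑ a ∈ T, 2 * g m * (g a * (m - a)) := by
    rw [← Finset.sum_add_distrib]
    exact Finset.sum_congr rfl fun a _ => by ring
  linarith

lemma neg_def : ∀ S : Finset ℝ, ∀ f : ℝ → ℝ, (∑ a ∈ S, f a) = 0 →
    ∑ a ∈ S, ∑ b ∈ S, f a * f b * |a - b| ≤ 0 := by
  intro S
  induction S using Finset.strongInduction with
  | _ S ih =>
    intro f hf
    by_cases h1 : S.card ≤ 1
    · interval_cases h : S.card
      · rw [Finset.card_eq_zero.mp h]; simp
      · obtain ⟨a, rfl⟩ := Finset.card_eq_one.mp h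
        simp
    · push_neg at h1
      have hne : S.Nonempty := Finset.card_pos.mp (by omega)
      set m := S.max' hne with hm
      have hmS : m ∈ S := S.max'_mem hne
      set S' := S.erase m with hS'
      have hmS' : m ∉ S' := Finset.notMem_erase m S
      have hcard' : S'.card = S.card - 1 := Finset.card_erase_of_mem hmS
      have hne' : S'.Nonempty := Finset.card_pos.mp (by omega)
      set m' := S'.max' hne' with hm'
      have hm'S' : m' ∈ S' := S'.max'_mem hne'
      set S'' := S'.erase m' with hS''
      have hm'S'' : m' ∉ S'' := Finset.notMem_erase m' S'
      have hiS : S = insert m S' := (Finset.insert_erase hmS).symm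
      have hiS' : S' = insert m' S'' := (Finset.insert_erase hm'S').symm
      have hleS' : ∀ a ∈ S', a ≤ m := fun a ha => S.le_max' a (Finset.mem_of_mem_erase ha)
      have hleS'' : ∀ a ∈ S'', a ≤ m' := fun a ha => S'.le_max' a (Finset.mem_of_mem_erase ha)
      have hm'm : m' ≤ m := hleS' m' hm'S'
      -- sum decomposition
      have hsum : f m + (f m' + ∑ a ∈ S'', f a) = 0 := by
        rw [← Finset.sum_insert hm'S'', ← hiS', ← Finset.sum_insert hmS', ← hiS]
        exact hf
      obtain ⟨f', hval, hf'ne⟩ : ∃ f' : ℝ → ℝ, f' m' = f m' + f m ∧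
          ∀ a, a ≠ m' → f' a = f a :=
        ⟨Function.update f m' (f m' + f m), Function.update_self _ _ _,
          fun a ha => Function.update_of_ne ha _ f⟩
      have hf'S'' : ∀ a ∈ S'', f' a = f a := fun a ha =>
        hf'ne a (Finset.ne_of_mem_erase ha)
      have hsum' : (∑ a ∈ S', f' a) = 0 := by
        rw [hiS', Finset.sum_insert hm'S'', Finset.sum_congr rfl hf'S'', hval]
        linarith
      have hsub : S' ⊂ S := Finset.erase_ssubset hmS
      have hQ' : ∑ a ∈ S', ∑ b ∈ S', f' a * f' b * |a - b| ≤ 0 := ih S' hsub f' hsum'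
      -- expand Q(S,f)
      have e1 : ∑ a ∈ S, ∑ b ∈ S, f a * f b * |a - b|
          = (∑ a ∈ S', ∑ b ∈ S', f a * f b * |a - b|)
            + 2 * f m * ∑ a ∈ S', f a * (m - a) := by
        rw [hiS]; exact expand_insert m S' hmS' hleS' f
      have e2 : ∑ a ∈ S', ∑ b ∈ S', f a * f b * |a - b|
          = (∑ a ∈ S'', ∑ b ∈ S'', f a * f b * |a - b|)
            + 2 * f m' * ∑ a ∈ S'', f a * (m' - a) := by
        rw [hiS']; exact expand_insert m' S'' hm'S'' hleS'' f
      have e3 : ∑ a ∈ S', ∑ b ∈ S', f' a * f' b * |a - b|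
          = (∑ a ∈ S'', ∑ b ∈ S'', f a * f b * |a - b|)
            + 2 * (f m' + f m) * ∑ a ∈ S'', f a * (m' - a) := by
        rw [hiS', expand_insert m' S'' hm'S'' hleS'' f']
        congr 1
        · exact Finset.sum_congr rfl fun a ha => Finset.sum_congr rfl fun b hb => by
            rw [hf'S'' a ha, hf'S'' b hb]
        · rw [hval]
          congr 1
          exact Finset.sum_congr rfl fun a ha => by rw [hf'S'' a ha]
      -- the sum over S' splits
      have e4 : ∑ a ∈ S', f a * (m - a)
          = f m' * (m - m') + ∑ a ∈ S'', f a * (m - a) := by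
        rw [hiS', Finset.sum_insert hm'S'']
      have e5 : (∑ a ∈ S'', f a * (m - a)) - (∑ a ∈ S'', f a * (m' - a))
          = (m - m') * ∑ a ∈ S'', f a := by
        rw [← Finset.sum_sub_distrib, Finset.mul_sum]
        exact Finset.sum_congr rfl fun a _ => by ring
      have key : ∑ a ∈ S, ∑ b ∈ S, f a * f b * |a - b|
          = (∑ a ∈ S', ∑ b ∈ S', f' a * f' b * |a - b|) - 2 * (f m)^2 * (m - m') := by
        linear_combination e1 + e2 - e3 + (2 * f m) * e4 + (2 * f m) * e5
          + (2 * f m * (m - m')) * hsum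
      have hprod : 0 ≤ (f m)^2 * (m - m') :=
        mul_nonneg (sq_nonneg _) (sub_nonneg.mpr hm'm)
      rw [key]; linarith

lemma sum_ind (U V T : Finset ℝ) (hU : U ⊆ T) (hV : V ⊆ T) (u v : ℝ → ℝ)
    (k : ℝ → ℝ → ℝ) :
    ∑ a ∈ T, ∑ b ∈ T, (if a ∈ U then u a else 0) * (if b ∈ V then v b else 0) * k a b
      = ∑ a ∈ U, ∑ b ∈ V, u a * v b * k a b := by
  rw [← Finset.sum_subset hU (fun a _ ha => by simp [ha])]
  refine Finset.sum_congr rfl fun a ha => ?_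
  rw [← Finset.sum_subset hV (fun b _ hb => by simp [hb])]
  refine Finset.sum_congr rfl fun b hb => by simp [ha, hb]

/-- There are no two finitely supported probability distributions on `ℝ` such that
the expected inner distance of each distribution strictly exceeds the expected
crossing distance. -/
theorem no_L1_distribution_real :
    ¬ ∃ (SX SY : Finset ℝ) (wX wY : ℝ → ℝ),
      (∀ x ∈ SX, 0 ≤ wX x) ∧ (∀ y ∈ SY, 0 ≤ wY y) ∧
      (∑ x ∈ SX, wX x) = 1 ∧ (∑ y ∈ SY, wY y) = 1 ∧
      (∑ x₁ ∈ SX, ∑ x₂ ∈ SX, wX x₁ * wX x₂ * |x₁ - x₂|) >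
        (∑ x ∈ SX, ∑ y ∈ SY, wX x * wY y * |x - y|) ∧
      (∑ y₁ ∈ SY, ∑ y₂ ∈ SY, wY y₁ * wY y₂ * |y₁ - y₂|) >
        (∑ x ∈ SX, ∑ y ∈ SY, wX x * wY y * |x - y|) := by
  rintro ⟨SX, SY, wX, wY, -, -, hX1, hY1, hA, hB⟩
  set T := SX ∪ SY with hT
  set f : ℝ → ℝ := fun a => (if a ∈ SX then wX a else 0) - (if a ∈ SY then wY a else 0)
    with hfdef
  have hsub1 : SX ⊆ T := Finset.subset_union_left
  have hsub2 : SY ⊆ T := Finset.subset_union_right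
  have hsum : (∑ a ∈ T, f a) = 0 := by
    simp only [hfdef, Finset.sum_sub_distrib]
    rw [← Finset.sum_subset hsub1 (fun a _ ha => if_neg ha),
        ← Finset.sum_subset hsub2 (fun a _ ha => if_neg ha)] at *
    simp only [Finset.sum_ite_mem, Finset.inter_self] at *
    rw [hX1, hY1]; ring
  have hQ := neg_def T f hsum
  have expand : ∑ a ∈ T, ∑ b ∈ T, f a * f b * |a - b|
      = (∑ a ∈ SX, ∑ b ∈ SX, wX a * wX b * |a - b|)
        + (∑ a ∈ SY, ∑ b ∈ SY, wY a * wY b * |a - b|)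
        - (∑ a ∈ SX, ∑ b ∈ SY, wX a * wY b * |a - b|)
        - (∑ a ∈ SY, ∑ b ∈ SX, wY a * wX b * |a - b|) := by
    have : ∀ a b : ℝ, f a * f b * |a - b|
        = (if a ∈ SX then wX a else 0) * (if b ∈ SX then wX b else 0) * |a - b|
          + (if a ∈ SY then wY a else 0) * (if b ∈ SY then wY b else 0) * |a - b|
          - (if a ∈ SX then wX a else 0) * (if b ∈ SY then wY b else 0) * |a - b|
          - (if a ∈ SY then wY a else 0) * (if b ∈ SX then wX b else 0) * |a - b| := by
      intro a b; simp only [hfdef]; ring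
    simp only [this]
    simp only [Finset.sum_sub_distrib, Finset.sum_add_distrib]
    rw [sum_ind SX SX T hsub1 hsub1 wX wX (fun a b => |a - b|),
        sum_ind SY SY T hsub2 hsub2 wY wY (fun a b => |a - b|),
        sum_ind SX SY T hsub1 hsub2 wX wY (fun a b => |a - b|),
        sum_ind SY SX T hsub2 hsub1 wY wX (fun a b => |a - b|)]
  have hsym : (∑ a ∈ SY, ∑ b ∈ SX, wY a * wX b * |a - b|)
      = ∑ x ∈ SX, ∑ y ∈ SY, wX x * wY y * |x - y| := by
    rw [Finset.sum_comm]
    exact Finset.sum_congr rfl fun a _ => Finset.sum_congr rfl fun b _ => by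
      rw [abs_sub_comm]; ring
  rw [expand, hsym] at hQ
  linarith
end

section
/- Let m ≥ 2 be an integer and α > 0 a real number. There do not exist sets A, B ⊆ ℝ^d, each of cardinality m, such that (i) for any two distinct points u, v both in A or both in B, ‖u−v‖₁ ≥ (m/(m−1))·α, and (ii) for any u ∈ A and v ∈ B, ‖u−v‖₁ < α. -/
open Finset

private lemma pair_key {t t' a b : ℝ} (ht : t < t')
    (ha : a = t ∨ t' ≤ a) (hb : b = t ∨ t' ≤ b) :
    |a - b| = |(if a = t then t' else a) - (if b = t then t' else b)|
      + (t' - t) * ((if a = t then (1:ℝ) else 0) + (if b = t then (1:ℝ) else 0)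
          - 2 * (if a = t then (1:ℝ) else 0) * (if b = t then (1:ℝ) else 0)) := by
  by_cases h1 : a = t <;> by_cases h2 : b = t
  · rw [if_pos h1, if_pos h1, if_pos h2, if_pos h2, h1, h2]
    norm_num
  · have hb' : t' ≤ b := hb.resolve_left h2
    rw [if_pos h1, if_pos h1, if_neg h2, if_neg h2, h1,
      abs_of_nonpos (by linarith), abs_of_nonpos (by linarith)]
    ring
  · have ha' : t' ≤ a := ha.resolve_left h1
    rw [if_neg h1, if_neg h1, if_pos h2, if_pos h2, h2,
      abs_of_nonneg (by linarith), abs_of_nonneg (by linarith)]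
    ring
  · rw [if_neg h1, if_neg h1, if_neg h2, if_neg h2]
    ring

private lemma double_sum_split {ι : Type*} (s : Finset ι) (f g : ι → ℝ) :
    ∑ i ∈ s, ∑ j ∈ s, (g i * f j + f i * g j - 2 * (g i * g j))
      = (∑ i ∈ s, g i) * (∑ i ∈ s, f i) + (∑ i ∈ s, f i) * (∑ i ∈ s, g i)
        - 2 * ((∑ i ∈ s, g i) * (∑ i ∈ s, g i)) := by
  simp only [Finset.sum_add_distrib, Finset.sum_sub_distrib, ← Finset.mul_sum,
    ← Finset.sum_mul]

private lemma negtype {ι : Type*} (s : Finset ι) (c : ι → ℝ) (hc : ∑ i ∈ s, c i = 0) :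
    ∀ (k : ℕ) (x : ι → ℝ), (s.image x).card ≤ k →
      ∑ i ∈ s, ∑ j ∈ s, c i * c j * |x i - x j| ≤ 0 := by
  intro k
  induction k with
  | zero =>
      intro x hx
      rcases s.eq_empty_or_nonempty with h | h
      · simp [h]
      · have := Finset.card_pos.mpr (h.image x)
        omega
  | succ k ih =>
      intro x hx
      by_cases hk : (s.image x).card ≤ k
      · exact ih x hk
      by_cases h2 : 2 ≤ (s.image x).card
      · -- main case : raise the minimum value
        have hS : (s.image x).Nonempty := card_pos.mp (by omega)
        set t := (s.image x).min' hS with htdef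
        have htS : t ∈ s.image x := (s.image x).min'_mem hS
        have hS' : ((s.image x).erase t).Nonempty := by
          rw [← card_pos, card_erase_of_mem htS]; omega
        set t' := ((s.image x).erase t).min' hS' with ht'def
        have ht'S : t' ∈ (s.image x).erase t := min'_mem _ _
        have htt' : t < t' :=
          lt_of_le_of_ne ((s.image x).min'_le _ (mem_of_mem_erase ht'S))
            (Ne.symm (ne_of_mem_erase ht'S))
        set x' : ι → ℝ := fun i => if x i = t then t' else x i with hx'def
        set e : ι → ℝ := fun i => if x i = t then (1:ℝ) else 0 with hedef
        have hmem : ∀ i ∈ s, x i = t ∨ t' ≤ x i := by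
          intro i hi
          by_cases h : x i = t
          · exact Or.inl h
          · exact Or.inr (((s.image x).erase t).min'_le _
              (mem_erase.mpr ⟨h, mem_image_of_mem x hi⟩))
        have himg : (s.image x').card ≤ k := by
          have hsub : s.image x' ⊆ (s.image x).erase t := by
            intro y hy
            rcases mem_image.mp hy with ⟨i, hi, rfl⟩
            by_cases h : x i = t
            · have hxi : x' i = t' := by simp [hx'def, h]
              rw [hxi]; exact ht'S
            · have hxi : x' i = x i := by simp [hx'def, h]
              rw [hxi]
              exact mem_erase.mpr ⟨h, mem_image_of_mem x hi⟩
          calc (s.image x').card ≤ ((s.image x).erase t).card := card_le_card hsub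
            _ = (s.image x).card - 1 := card_erase_of_mem htS
            _ ≤ k := by omega
        have hstep : ∑ i ∈ s, ∑ j ∈ s, c i * c j * |x i - x j|
            = ∑ i ∈ s, ∑ j ∈ s, (c i * c j * |x' i - x' j|
                + (t' - t) * ((c i * e i) * c j + c i * (c j * e j)
                    - 2 * ((c i * e i) * (c j * e j)))) := by
          refine Finset.sum_congr rfl fun i hi => Finset.sum_congr rfl fun j hj => ?_
          rw [pair_key htt' (hmem i hi) (hmem j hj)]
          simp only [hx'def, hedef]
          ring
        have hE : ∑ i ∈ s, ∑ j ∈ s, c i * c j * |x i - x j|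
            = (∑ i ∈ s, ∑ j ∈ s, c i * c j * |x' i - x' j|)
              - 2 * (t' - t) * (∑ i ∈ s, c i * e i) ^ 2 := by
          rw [hstep]
          have hsplit : ∑ i ∈ s, ∑ j ∈ s, (c i * c j * |x' i - x' j|
                + (t' - t) * ((c i * e i) * c j + c i * (c j * e j)
                    - 2 * ((c i * e i) * (c j * e j))))
              = (∑ i ∈ s, ∑ j ∈ s, c i * c j * |x' i - x' j|)
                + (t' - t) * (∑ i ∈ s, ∑ j ∈ s, ((c i * e i) * c j + c i * (c j * e j)
                    - 2 * ((c i * e i) * (c j * e j)))) := by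
            simp only [Finset.sum_add_distrib, Finset.mul_sum]
          rw [hsplit, double_sum_split s c (fun i => c i * e i), hc]
          ring
        rw [hE]
        have hrec := ih x' himg
        have hnn : 0 ≤ 2 * (t' - t) * (∑ i ∈ s, c i * e i) ^ 2 := by
          have h1 : (0:ℝ) ≤ t' - t := by linarith
          positivity
        linarith
      · -- all values equal
        have hone : (s.image x).card ≤ 1 := by omega
        have hall := Finset.card_le_one.mp hone
        have hzero : ∑ i ∈ s, ∑ j ∈ s, c i * c j * |x i - x j| = 0 := by
          refine Finset.sum_eq_zero fun i hi => Finset.sum_eq_zero fun j hj => ?_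
          have : x i = x j := hall _ (mem_image_of_mem x hi) _ (mem_image_of_mem x hj)
          simp [this]
        simp [hzero]

private lemma coord_negtype {d : ℕ} (A B : Finset (Fin d → ℝ)) (hcard : A.card = B.card)
    (i : Fin d) :
    ∑ u ∈ A, ∑ v ∈ A, |u i - v i| + ∑ u ∈ B, ∑ v ∈ B, |u i - v i|
      ≤ 2 * ∑ u ∈ A, ∑ v ∈ B, |u i - v i| := by
  have h := negtype (A.disjSum B)
      (Sum.elim (fun _ => (1:ℝ)) (fun _ => (-1:ℝ)))
      (by simp [Finset.sum_disjSum, hcard])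
      ((A.disjSum B).image (Sum.elim (fun u => u i) (fun v => v i))).card
      (Sum.elim (fun u => u i) (fun v => v i)) le_rfl
  simp only [Finset.sum_disjSum, Sum.elim_inl, Sum.elim_inr, one_mul, mul_one,
    neg_mul, mul_neg, neg_neg, Finset.sum_neg_distrib, Finset.sum_add_distrib] at h
  have hsymm : ∑ u ∈ B, ∑ v ∈ A, |u i - v i| = ∑ u ∈ A, ∑ v ∈ B, |u i - v i| := by
    rw [Finset.sum_comm]
    exact Finset.sum_congr rfl fun u _ => Finset.sum_congr rfl fun v _ => abs_sub_comm _ _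
  linarith [h, hsymm]

/-- No polar-pair of point-sets in `L^1` with large gap: there do not exist sets
`A, B ⊆ ℝ^d` of cardinality `m ≥ 2` each such that all inner pairs are at `ℓ1`-distance
at least `(m/(m-1))·α` while all crossing pairs are at `ℓ1`-distance less than `α`. -/
theorem no_polar_pair_L1_large_gap (d m : ℕ) (hm : 2 ≤ m) (α : ℝ) (hα : 0 < α) :
    ¬ ∃ A B : Finset (Fin d → ℝ),
      A.card = m ∧ B.card = m ∧
      (∀ u ∈ A, ∀ v ∈ A, u ≠ v → (m : ℝ) / ((m : ℝ) - 1) * α ≤ ∑ i, |u i - v i|) ∧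
      (∀ u ∈ B, ∀ v ∈ B, u ≠ v → (m : ℝ) / ((m : ℝ) - 1) * α ≤ ∑ i, |u i - v i|) ∧
      (∀ u ∈ A, ∀ v ∈ B, (∑ i, |u i - v i|) < α) := by
  rintro ⟨A, B, hA, hB, hAA, hBB, hAB⟩
  have hm1 : (0:ℝ) < (m:ℝ) - 1 := by
    have : (2:ℝ) ≤ (m:ℝ) := by exact_mod_cast hm
    linarith
  have hAne : A.Nonempty := by rw [← card_pos, hA]; omega
  have hBne : B.Nonempty := by rw [← card_pos, hB]; omega
  set D : (Fin d → ℝ) → (Fin d → ℝ) → ℝ := fun u v => ∑ i, |u i - v i| with hD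
  -- negative type for ℓ1 distances
  have hneg : ∑ u ∈ A, ∑ v ∈ A, D u v + ∑ u ∈ B, ∑ v ∈ B, D u v
      ≤ 2 * ∑ u ∈ A, ∑ v ∈ B, D u v := by
    have hswap : ∀ (S T : Finset (Fin d → ℝ)),
        ∑ u ∈ S, ∑ v ∈ T, D u v = ∑ i : Fin d, ∑ u ∈ S, ∑ v ∈ T, |u i - v i| := by
      intro S T
      calc ∑ u ∈ S, ∑ v ∈ T, D u v = ∑ u ∈ S, ∑ i : Fin d, ∑ v ∈ T, |u i - v i| :=
            Finset.sum_congr rfl fun u _ => Finset.sum_comm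
        _ = ∑ i : Fin d, ∑ u ∈ S, ∑ v ∈ T, |u i - v i| := Finset.sum_comm
    rw [hswap A A, hswap B B, hswap A B, ← Finset.sum_add_distrib, Finset.mul_sum]
    exact Finset.sum_le_sum fun i _ => coord_negtype A B (by rw [hA, hB]) i
  -- lower bound for inner sums
  have hinner : ∀ (S : Finset (Fin d → ℝ)), S.card = m →
      (∀ u ∈ S, ∀ v ∈ S, u ≠ v → (m : ℝ) / ((m : ℝ) - 1) * α ≤ D u v) →
      (m:ℝ) * ((m:ℝ) * α) ≤ ∑ u ∈ S, ∑ v ∈ S, D u v := by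
    intro S hS hST
    have hrow : ∀ u ∈ S, (m:ℝ) * α ≤ ∑ v ∈ S, D u v := by
      intro u hu
      have h1 : ((S.erase u).card : ℝ) * ((m : ℝ) / ((m : ℝ) - 1) * α)
          ≤ ∑ v ∈ S.erase u, D u v := by
        have := Finset.card_nsmul_le_sum (S.erase u) (fun v => D u v)
          ((m : ℝ) / ((m : ℝ) - 1) * α)
          (fun v hv => hST u hu v (mem_of_mem_erase hv) (Ne.symm (ne_of_mem_erase hv)))
        simpa [nsmul_eq_mul] using this
      have hcarde : ((S.erase u).card : ℝ) = (m:ℝ) - 1 := by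
        rw [card_erase_of_mem hu, hS]
        have : (1:ℕ) ≤ m := by omega
        push_cast [Nat.cast_sub this]
        ring
      have h2 : ∑ v ∈ S.erase u, D u v + D u u = ∑ v ∈ S, D u v :=
        Finset.sum_erase_add S _ hu
      have h3 : D u u = 0 := by simp [hD]
      have h4 : ((m:ℝ) - 1) * ((m : ℝ) / ((m : ℝ) - 1) * α) = (m:ℝ) * α := by
        field_simp
      rw [hcarde, h4] at h1
      linarith
    have := Finset.card_nsmul_le_sum S (fun u => ∑ v ∈ S, D u v) ((m:ℝ) * α) hrow
    rw [hS] at this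
    simpa [nsmul_eq_mul, mul_assoc] using this
  have hAlow := hinner A hA hAA
  have hBlow := hinner B hB hBB
  -- upper bound for crossing sum
  have hcross : ∑ u ∈ A, ∑ v ∈ B, D u v < (m:ℝ) * ((m:ℝ) * α) := by
    have hrow : ∀ u ∈ A, ∑ v ∈ B, D u v < (m:ℝ) * α := by
      intro u hu
      calc ∑ v ∈ B, D u v < ∑ v ∈ B, α :=
            Finset.sum_lt_sum_of_nonempty hBne fun v hv => hAB u hu v hv
        _ = (m:ℝ) * α := by rw [Finset.sum_const, hB, nsmul_eq_mul]
    calc ∑ u ∈ A, ∑ v ∈ B, D u v < ∑ u ∈ A, (m:ℝ) * α :=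
          Finset.sum_lt_sum_of_nonempty hAne hrow
      _ = (m:ℝ) * ((m:ℝ) * α) := by rw [Finset.sum_const, hA, nsmul_eq_mul]
  linarith
end

section
/- Let α > β ≥ 0 be real numbers. For any dimension d, there do not exist finitely supported probability distributions 𝒜 and ℬ on ℝ^d such that E_{x,x'∼𝒜}[‖x−x'‖₀] ≥ α, E_{y,y'∼ℬ}[‖y−y'‖₀] ≥ α, and E_{x∼𝒜, y∼ℬ}[‖x−y‖₀] ≤ β, where in each expectation the samples are drawn independently. -/
open Finset

private lemma fiber_double_sum {d : ℕ} (S T : Finset (Fin d → ℝ)) (w u : (Fin d → ℝ) → ℝ)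
    (i : Fin d) (V : Finset ℝ) (hS : ∀ x ∈ S, x i ∈ V) :
    ∑ x ∈ S, ∑ y ∈ T, w x * u y * (if x i = y i then (1:ℝ) else 0)
      = ∑ v ∈ V, (∑ x ∈ S.filter (fun x => x i = v), w x) *
          (∑ y ∈ T.filter (fun y => y i = v), u y) := by
  have key : ∀ v ∈ V,
      (∑ x ∈ S.filter (fun x => x i = v), w x) * (∑ y ∈ T.filter (fun y => y i = v), u y)
        = ∑ x ∈ S.filter (fun x => x i = v), w x * ∑ y ∈ T.filter (fun y => y i = x i), u y := by
    intro v hv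
    rw [Finset.sum_mul]
    refine Finset.sum_congr rfl fun x hx => ?_
    simp only [Finset.mem_filter] at hx
    rw [hx.2]
  rw [Finset.sum_congr rfl key, Finset.sum_fiberwise_of_maps_to hS]
  refine Finset.sum_congr rfl fun x _ => ?_
  rw [Finset.mul_sum, Finset.sum_filter]
  refine Finset.sum_congr rfl fun y _ => ?_
  by_cases h : x i = y i
  · simp [h]
  · rw [if_neg h, if_neg fun h' => h h'.symm, mul_zero]

private lemma ham_cast {d : ℕ} (x y : Fin d → ℝ) :
    (hammingDist x y : ℝ) = ∑ i : Fin d, if x i = y i then (0:ℝ) else 1 := by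
  rw [hammingDist, Finset.card_filter]
  push_cast
  refine Finset.sum_congr rfl fun i _ => ?_
  by_cases h : x i = y i <;> simp [h]

/-- No distribution for `L^0`: for reals `α > β ≥ 0` and any dimension `d`, there are no
finitely supported probability distributions `𝒜, ℬ` on `ℝ^d` whose expected inner
Hamming distances are at least `α` while the expected crossing Hamming distance
is at most `β`. -/
theorem no_distribution_for_L0 (α β : ℝ) (hβ : 0 ≤ β) (hαβ : β < α) (d : ℕ) :
    ¬ ∃ (SA SB : Finset (Fin d → ℝ)) (wA wB : (Fin d → ℝ) → ℝ),
      (∀ x ∈ SA, 0 ≤ wA x) ∧ (∀ y ∈ SB, 0 ≤ wB y) ∧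
      (∑ x ∈ SA, wA x) = 1 ∧ (∑ y ∈ SB, wB y) = 1 ∧
      α ≤ (∑ x ∈ SA, ∑ x' ∈ SA, wA x * wA x' * (hammingDist x x' : ℝ)) ∧
      α ≤ (∑ y ∈ SB, ∑ y' ∈ SB, wB y * wB y' * (hammingDist y y' : ℝ)) ∧
      (∑ x ∈ SA, ∑ y ∈ SB, wA x * wB y * (hammingDist x y : ℝ)) ≤ β := by
  rintro ⟨SA, SB, wA, wB, hwA, hwB, hA1, hB1, hAA, hBB, hAB⟩
  -- the set of values appearing in coordinate i
  set V : Fin d → Finset ℝ := fun i => SA.image (fun x => x i) ∪ SB.image (fun x => x i) with hV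
  set p : Fin d → ℝ → ℝ := fun i v => ∑ x ∈ SA.filter (fun x => x i = v), wA x with hp
  set q : Fin d → ℝ → ℝ := fun i v => ∑ y ∈ SB.filter (fun y => y i = v), wB y with hq
  have hSA : ∀ i : Fin d, ∀ x ∈ SA, x i ∈ V i := fun i x hx =>
    Finset.mem_union_left _ (Finset.mem_image_of_mem _ hx)
  have hSB : ∀ i : Fin d, ∀ y ∈ SB, y i ∈ V i := fun i y hy =>
    Finset.mem_union_right _ (Finset.mem_image_of_mem _ hy)
  -- decompose a double sum of hamming distances coordinatewise
  have decomp : ∀ (S T : Finset (Fin d → ℝ)) (w u : (Fin d → ℝ) → ℝ),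
      ∑ x ∈ S, ∑ y ∈ T, w x * u y * (hammingDist x y : ℝ)
        = ∑ i : Fin d, ∑ x ∈ S, ∑ y ∈ T,
            w x * u y * (1 - (if x i = y i then (1:ℝ) else 0)) := by
    intro S T w u
    calc ∑ x ∈ S, ∑ y ∈ T, w x * u y * (hammingDist x y : ℝ)
        = ∑ x ∈ S, ∑ y ∈ T, ∑ i : Fin d,
            w x * u y * (1 - (if x i = y i then (1:ℝ) else 0)) := by
          refine Finset.sum_congr rfl fun x _ => Finset.sum_congr rfl fun y _ => ?_
          rw [ham_cast, Finset.mul_sum]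
          refine Finset.sum_congr rfl fun i _ => ?_
          by_cases h : x i = y i <;> simp [h]
      _ = ∑ x ∈ S, ∑ i : Fin d, ∑ y ∈ T,
            w x * u y * (1 - (if x i = y i then (1:ℝ) else 0)) :=
          Finset.sum_congr rfl fun x _ => Finset.sum_comm
      _ = ∑ i : Fin d, ∑ x ∈ S, ∑ y ∈ T,
            w x * u y * (1 - (if x i = y i then (1:ℝ) else 0)) := Finset.sum_comm
  -- per-coordinate inner products
  have sumA : ∀ i : Fin d, ∑ v ∈ V i, p i v = 1 := fun i =>
    (Finset.sum_fiberwise_of_maps_to (hSA i) wA).trans hA1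
  have sumB : ∀ i : Fin d, ∑ v ∈ V i, q i v = 1 := fun i =>
    (Finset.sum_fiberwise_of_maps_to (hSB i) wB).trans hB1
  have eqAA : ∀ i : Fin d, ∑ x ∈ SA, ∑ y ∈ SA, wA x * wA y * (if x i = y i then (1:ℝ) else 0)
      = ∑ v ∈ V i, p i v * p i v := fun i => fiber_double_sum SA SA wA wA i (V i) (hSA i)
  have eqBB : ∀ i : Fin d, ∑ x ∈ SB, ∑ y ∈ SB, wB x * wB y * (if x i = y i then (1:ℝ) else 0)
      = ∑ v ∈ V i, q i v * q i v := fun i => fiber_double_sum SB SB wB wB i (V i) (hSB i)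
  have eqAB : ∀ i : Fin d, ∑ x ∈ SA, ∑ y ∈ SB, wA x * wB y * (if x i = y i then (1:ℝ) else 0)
      = ∑ v ∈ V i, p i v * q i v := fun i => fiber_double_sum SA SB wA wB i (V i) (hSA i)
  -- expand each double sum with (1 - indicator)
  have expand : ∀ (S T : Finset (Fin d → ℝ)) (w u : (Fin d → ℝ) → ℝ), (∑ x ∈ S, w x) = 1 →
      (∑ y ∈ T, u y) = 1 → ∀ i : Fin d,
      ∑ x ∈ S, ∑ y ∈ T, w x * u y * (1 - (if x i = y i then (1:ℝ) else 0))
        = 1 - ∑ x ∈ S, ∑ y ∈ T, w x * u y * (if x i = y i then (1:ℝ) else 0) := by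
    intro S T w u hS hT i
    have h1 : ∑ x ∈ S, ∑ y ∈ T, w x * u y = 1 := by
      rw [← Finset.sum_mul_sum, hS, hT, one_mul]
    simp only [mul_sub, mul_one, Finset.sum_sub_distrib]
    rw [h1]
  -- the negative-type inequality per coordinate
  have neg_type : ∀ i : Fin d,
      (1 - ∑ v ∈ V i, p i v * p i v) + (1 - ∑ v ∈ V i, q i v * q i v)
        ≤ 2 * (1 - ∑ v ∈ V i, p i v * q i v) := by
    intro i
    have h0 : (0:ℝ) ≤ ∑ v ∈ V i, (p i v - q i v) ^ 2 :=
      Finset.sum_nonneg fun v _ => sq_nonneg _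
    have hexp : ∑ v ∈ V i, (p i v - q i v) ^ 2
        = ∑ v ∈ V i, p i v * p i v + ∑ v ∈ V i, q i v * q i v
          - 2 * ∑ v ∈ V i, p i v * q i v := by
      simp only [Finset.mul_sum, ← Finset.sum_add_distrib, ← Finset.sum_sub_distrib]
      exact Finset.sum_congr rfl fun v _ => by ring
    nlinarith [h0, hexp]
  -- put everything together
  have hAA' : ∑ x ∈ SA, ∑ y ∈ SA, wA x * wA y * (hammingDist x y : ℝ)
      = ∑ i : Fin d, (1 - ∑ v ∈ V i, p i v * p i v) := by
    rw [decomp]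
    exact Finset.sum_congr rfl fun i _ => by rw [expand SA SA wA wA hA1 hA1 i, eqAA i]
  have hBB' : ∑ x ∈ SB, ∑ y ∈ SB, wB x * wB y * (hammingDist x y : ℝ)
      = ∑ i : Fin d, (1 - ∑ v ∈ V i, q i v * q i v) := by
    rw [decomp]
    exact Finset.sum_congr rfl fun i _ => by rw [expand SB SB wB wB hB1 hB1 i, eqBB i]
  have hAB' : ∑ x ∈ SA, ∑ y ∈ SB, wA x * wB y * (hammingDist x y : ℝ)
      = ∑ i : Fin d, (1 - ∑ v ∈ V i, p i v * q i v) := by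
    rw [decomp]
    exact Finset.sum_congr rfl fun i _ => by rw [expand SA SB wA wB hA1 hB1 i, eqAB i]
  have main : ∑ i : Fin d, (1 - ∑ v ∈ V i, p i v * p i v)
      + ∑ i : Fin d, (1 - ∑ v ∈ V i, q i v * q i v)
      ≤ 2 * ∑ i : Fin d, (1 - ∑ v ∈ V i, p i v * q i v) := by
    rw [← Finset.sum_add_distrib, Finset.mul_sum]
    exact Finset.sum_le_sum fun i _ => neg_type i
  rw [hAA'] at hAA
  rw [hBB'] at hBB
  rw [hAB'] at hAB
  linarith
end

section
/- For every integer n > 0, there exist sets A, B ⊆ ℝ^n, each of cardinality n, such that (i) for any two distinct a, a' ∈ A, ‖a−a'‖₀ = n, (ii) for any two distinct b, b' ∈ B, ‖b−b'‖₀ = n, and (iii) for any a ∈ A and b ∈ B, ‖a−b‖₀ = n−1. -/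
open Finset

/-- Upper bound for `L^0` with arbitrary alphabet: for every `n > 0` there are sets
`A, B ⊆ ℝ^n` of `n` points each such that all distinct inner pairs are at Hamming
distance exactly `n` and all crossing pairs are at Hamming distance exactly `n - 1`. -/
theorem L0_upper_bound (n : ℕ) (hn : 0 < n) :
    ∃ A B : Finset (Fin n → ℝ),
      A.card = n ∧ B.card = n ∧
      (∀ a ∈ A, ∀ a' ∈ A, a ≠ a' → hammingDist a a' = n) ∧
      (∀ b ∈ B, ∀ b' ∈ B, b ≠ b' → hammingDist b b' = n) ∧
      (∀ a ∈ A, ∀ b ∈ B, hammingDist a b = n - 1) := by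
  haveI : NeZero n := ⟨hn.ne'⟩
  set fA : Fin n → (Fin n → ℝ) := fun k _ => ((k : ℕ) : ℝ) with hfA
  set fB : Fin n → (Fin n → ℝ) := fun k i => (((i + k : Fin n) : ℕ) : ℝ) with hfB
  have cast_inj : ∀ a b : Fin n, ((a : ℕ) : ℝ) = ((b : ℕ) : ℝ) → a = b := by
    intro a b h
    exact Fin.val_injective (Nat.cast_injective h)
  have hAinj : Function.Injective fA := by
    intro k k' h
    exact cast_inj _ _ (congrFun h ⟨0, hn⟩)
  have hBinj : Function.Injective fB := by
    intro k k' h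
    have := cast_inj _ _ (congrFun h 0)
    simpa using this
  refine ⟨univ.image fA, univ.image fB, ?_, ?_, ?_, ?_, ?_⟩
  · rw [Finset.card_image_of_injective _ hAinj, Finset.card_univ, Fintype.card_fin]
  · rw [Finset.card_image_of_injective _ hBinj, Finset.card_univ, Fintype.card_fin]
  · intro a ha a' ha' hne
    obtain ⟨k, -, rfl⟩ := Finset.mem_image.mp ha
    obtain ⟨k', -, rfl⟩ := Finset.mem_image.mp ha'
    have hkk : k ≠ k' := fun h => hne (by rw [h])
    unfold hammingDist
    rw [Finset.filter_true_of_mem, Finset.card_univ, Fintype.card_fin]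
    intro i _
    exact fun h => hkk (cast_inj _ _ h)
  · intro b hb b' hb' hne
    obtain ⟨k, -, rfl⟩ := Finset.mem_image.mp hb
    obtain ⟨k', -, rfl⟩ := Finset.mem_image.mp hb'
    have hkk : k ≠ k' := fun h => hne (by rw [h])
    unfold hammingDist
    rw [Finset.filter_true_of_mem, Finset.card_univ, Fintype.card_fin]
    intro i _
    intro h
    have : i + k = i + k' := cast_inj _ _ h
    exact hkk (by simpa using this)
  · intro a ha b hb
    obtain ⟨k, -, rfl⟩ := Finset.mem_image.mp ha
    obtain ⟨m, -, rfl⟩ := Finset.mem_image.mp hb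
    unfold hammingDist
    have hfilter : (univ.filter fun i => fA k i ≠ fB m i) = univ.erase (k - m) := by
      ext i
      simp only [Finset.mem_filter, Finset.mem_erase, Finset.mem_univ, true_and, and_true,
        hfA, hfB]
      constructor
      · intro h hi
        apply h
        subst hi
        congr 1
        simp [sub_add_cancel]
      · intro h h'
        apply h
        exact eq_sub_of_add_eq (cast_inj _ _ h'.symm)
    rw [hfilter, Finset.card_erase_of_mem (Finset.mem_univ _), Finset.card_univ,
      Fintype.card_fin]
end

section
/- For every integer n > 0, there exist sets A, B ⊆ {0,1}^{n²}, each of cardinality n, such that (i) for any two distinct a, a' ∈ A, ‖a−a'‖₀ = 2n, (ii) for any two distinct b, b' ∈ B, ‖b−b'‖₀ = 2n, and (iii) for any a ∈ A and b ∈ B, ‖a−b‖₀ = 2(n−1). -/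
open Finset

private lemma ham_comp_equiv {α β γ : Type*} [Fintype α] [Fintype β] [DecidableEq γ]
    (e : α ≃ β) (x y : β → γ) :
    hammingDist (x ∘ e) (y ∘ e) = hammingDist x y := by
  simp only [hammingDist]
  apply Finset.card_bij' (fun a _ => e a) (fun b _ => e.symm b) <;> simp

private def rowP (n : ℕ) (i : Fin n) : Fin n × Fin n → Fin 2 :=
  fun p => if p.1 = i then 1 else 0

private def colP (n : ℕ) (j : Fin n) : Fin n × Fin n → Fin 2 :=
  fun p => if p.2 = j then 1 else 0

private lemma row_dist {n : ℕ} (i i' : Fin n) (h : i ≠ i') :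
    hammingDist (rowP n i) (rowP n i') = 2 * n := by
  simp only [hammingDist, rowP]
  have hfilter : (Finset.univ.filter fun p : Fin n × Fin n =>
      (if p.1 = i then (1 : Fin 2) else 0) ≠ (if p.1 = i' then 1 else 0))
      = ({i, i'} : Finset (Fin n)) ×ˢ Finset.univ := by
    ext p
    by_cases h1 : p.1 = i <;> by_cases h2 : p.1 = i' <;>
      simp_all [Finset.mem_product]
  erw [hfilter, Finset.card_product]
  rw [Finset.card_insert_of_notMem (by simpa using h), Finset.card_singleton]
  simp only [Finset.card_univ, Fintype.card_fin, one_mul, mul_one]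

private lemma cross_dist {n : ℕ} (i j : Fin n) :
    hammingDist (rowP n i) (colP n j) = 2 * (n - 1) := by
  simp only [hammingDist, rowP, colP]
  have hfilter : (Finset.univ.filter fun p : Fin n × Fin n =>
      (if p.1 = i then (1 : Fin 2) else 0) ≠ (if p.2 = j then 1 else 0))
      = (({i} : Finset (Fin n)) ×ˢ ({j}ᶜ : Finset (Fin n)))
        ∪ (({i}ᶜ : Finset (Fin n)) ×ˢ ({j} : Finset (Fin n))) := by
    ext ⟨p1, p2⟩
    by_cases h1 : p1 = i <;> by_cases h2 : p2 = j <;>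
      simp_all [Finset.mem_product, Prod.ext_iff] <;> aesop
  erw [hfilter, Finset.card_union_of_disjoint, Finset.card_product,
    Finset.card_product]
  · have h1 : ({j}ᶜ : Finset (Fin n)).card = n - 1 := by
      rw [Finset.card_compl]; simp
    have h2 : ({i}ᶜ : Finset (Fin n)).card = n - 1 := by
      rw [Finset.card_compl]; simp
    rw [h1, h2]
    simp only [Finset.card_singleton, one_mul, mul_one]
    omega
  · rw [Finset.disjoint_left]
    rintro ⟨p1, p2⟩ hp hq
    simp only [Finset.mem_product, Finset.mem_singleton, Finset.mem_compl] at hp hq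
    exact hq.1 hp.1

private lemma rowP_inj {n : ℕ} : Function.Injective (rowP n) := by
  intro i i' h
  by_contra hne
  have := congrFun h (i, i)
  simp [rowP, hne] at this

private lemma colP_inj {n : ℕ} : Function.Injective (colP n) := by
  intro j j' h
  by_contra hne
  have := congrFun h (j, j)
  simp [colP, hne] at this

/-- Upper bound for `L^0` with binary vectors: for every `n > 0` there are sets
`A, B ⊆ {0,1}^{n²}` of `n` points each such that all distinct inner pairs are at Hamming
distance exactly `2n` and all crossing pairs are at Hamming distance exactly `2(n-1)`. -/
theorem L0_upper_bound_binary (n : ℕ) (hn : 0 < n) :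
    ∃ A B : Finset (Fin (n ^ 2) → Fin 2),
      A.card = n ∧ B.card = n ∧
      (∀ a ∈ A, ∀ a' ∈ A, a ≠ a' → hammingDist a a' = 2 * n) ∧
      (∀ b ∈ B, ∀ b' ∈ B, b ≠ b' → hammingDist b b' = 2 * n) ∧
      (∀ a ∈ A, ∀ b ∈ B, hammingDist a b = 2 * (n - 1)) := by
  have hsq : n ^ 2 = n * n := sq n
  let e : Fin (n ^ 2) ≃ Fin n × Fin n := (finCongr hsq).trans finProdFinEquiv.symm
  have hrow_inj : Function.Injective (fun i : Fin n => rowP n i ∘ e) := by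
    intro i i' h
    exact rowP_inj (funext fun p => by
      have := congrFun h (e.symm p); simpa using this)
  have hcol_inj : Function.Injective (fun j : Fin n => colP n j ∘ e) := by
    intro j j' h
    exact colP_inj (funext fun p => by
      have := congrFun h (e.symm p); simpa using this)
  refine ⟨Finset.univ.image (fun i => rowP n i ∘ e),
          Finset.univ.image (fun j => colP n j ∘ e), ?_, ?_, ?_, ?_, ?_⟩
  · rw [Finset.card_image_of_injective _ hrow_inj]; simp
  · rw [Finset.card_image_of_injective _ hcol_inj]; simp
  · intro a ha a' ha' hne
    obtain ⟨i, _, rfl⟩ := Finset.mem_image.mp ha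
    obtain ⟨i', _, rfl⟩ := Finset.mem_image.mp ha'
    have hii : i ≠ i' := fun h => hne (by rw [h])
    rw [ham_comp_equiv e]
    exact row_dist i i' hii
  · intro b hb b' hb' hne
    obtain ⟨j, _, rfl⟩ := Finset.mem_image.mp hb
    obtain ⟨j', _, rfl⟩ := Finset.mem_image.mp hb'
    have hjj : j ≠ j' := fun h => hne (by rw [h])
    rw [ham_comp_equiv e]
    have : hammingDist (colP n j) (colP n j') = 2 * n := by
      simp only [hammingDist, colP]
      have hfilter : (Finset.univ.filter fun p : Fin n × Fin n =>
          (if p.2 = j then (1 : Fin 2) else 0) ≠ (if p.2 = j' then 1 else 0))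
          = Finset.univ ×ˢ ({j, j'} : Finset (Fin n)) := by
        ext p
        by_cases h1 : p.2 = j <;> by_cases h2 : p.2 = j' <;>
          simp_all [Finset.mem_product]
      erw [hfilter, Finset.card_product]
      rw [Finset.card_insert_of_notMem (by simpa using hjj), Finset.card_singleton]
      simp only [Finset.card_univ, Fintype.card_fin]
      omega
    exact this
  · intro a ha b hb
    obtain ⟨i, _, rfl⟩ := Finset.mem_image.mp ha
    obtain ⟨j, _, rfl⟩ := Finset.mem_image.mp hb
    rw [ham_comp_equiv e]
    exact cross_dist i j
end

section
/- For every real p with 1 < p < 2 and every integer n ≥ 1, there exist sets A, B ⊆ ℝ^{2n}, each of cardinality n, such that (i) for any two distinct u, v ∈ A, ‖u−v‖_p = 2^{1/p}, (ii) for any two distinct u, v ∈ B, ‖u−v‖_p = 2^{1/p}, and (iii) for any u ∈ A and v ∈ B, ‖u−v‖_p < 2^{1/p}. -/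
open Finset

lemma sum_ite_one_aux {n : ℕ} (i : Fin n) (X Z : ℝ) :
    ∑ m : Fin n, (if m = i then X else Z) = X + ((n : ℝ) - 1) * Z := by
  have h : ∀ m : Fin n, (if m = i then X else Z)
      = Z + (if m = i then X - Z else 0) := by
    intro m; by_cases h : m = i <;> simp [h]
  rw [Finset.sum_congr rfl fun m _ => h m, Finset.sum_add_distrib,
    Finset.sum_const, Finset.sum_ite_eq' Finset.univ i fun _ => X - Z]
  simp [Finset.card_univ]
  ring

lemma sum_ite_two_aux {n : ℕ} {i j : Fin n} (hij : i ≠ j) (X Y Z : ℝ) :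
    ∑ m : Fin n, (if m = i then X else if m = j then Y else Z)
      = X + Y + ((n : ℝ) - 2) * Z := by
  have h : ∀ m : Fin n, (if m = i then X else if m = j then Y else Z)
      = Z + ((if m = i then X - Z else 0) + (if m = j then Y - Z else 0)) := by
    intro m
    by_cases h1 : m = i
    · subst h1; simp [hij]
    · by_cases h2 : m = j
      · subst h2; simp [h1, Ne.symm hij]
      · simp [h1, h2]
  rw [Finset.sum_congr rfl fun m _ => h m, Finset.sum_add_distrib,
    Finset.sum_add_distrib, Finset.sum_const,
    Finset.sum_ite_eq' Finset.univ i fun _ => X - Z,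
    Finset.sum_ite_eq' Finset.univ j fun _ => Y - Z]
  simp [Finset.card_univ]
  ring

lemma key_construction (p : ℝ) (hp0 : 0 < p) (n : ℕ)
    (a1 a2 δ : ℝ) (ha1 : 0 < a1) (ha2 : 0 ≤ a2) (hδ : 0 < δ)
    (hδa1 : δ < a1) (ha2' : a2 ≤ 1)
    (hA : a1 ^ p + a2 ^ p = 1)
    (h1 : (a1 - δ) ^ p + (1 - a2) ^ p + ((n : ℝ) - 1) * δ ^ p < 2)
    (h2 : (a1 - δ) ^ p + a2 ^ p + 1 + ((n : ℝ) - 1) * δ ^ p < 2) :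
    ∃ A B : Finset (Fin (2 * n) → ℝ),
      A.card = n ∧ B.card = n ∧
      (∀ u ∈ A, ∀ v ∈ A, u ≠ v →
        (∑ i, |u i - v i| ^ p) ^ (1 / p) = (2 : ℝ) ^ (1 / p)) ∧
      (∀ u ∈ B, ∀ v ∈ B, u ≠ v →
        (∑ i, |u i - v i| ^ p) ^ (1 / p) = (2 : ℝ) ^ (1 / p)) ∧
      (∀ u ∈ A, ∀ v ∈ B,
        (∑ i, |u i - v i| ^ p) ^ (1 / p) < (2 : ℝ) ^ (1 / p)) := by
  have hpne : p ≠ 0 := ne_of_gt hp0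
  set e : Fin 2 × Fin n ≃ Fin (2 * n) := finProdFinEquiv with he
  set av : Fin n → Fin 2 × Fin n → ℝ :=
    fun j q => if q.2 = j then (if q.1 = 0 then a1 else a2) else 0 with hav
  set bv : Fin n → Fin 2 × Fin n → ℝ :=
    fun j q => if q.1 = 0 then δ else if q.2 = j then 1 else 0 with hbv
  set a : Fin n → (Fin (2 * n) → ℝ) := fun j k => av j (e.symm k) with ha
  set b : Fin n → (Fin (2 * n) → ℝ) := fun j k => bv j (e.symm k) with hb
  have hsplit : ∀ u v : Fin 2 × Fin n → ℝ,
      ∑ k : Fin (2 * n), |u (e.symm k) - v (e.symm k)| ^ p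
        = (∑ m : Fin n, |u (0, m) - v (0, m)| ^ p)
          + (∑ m : Fin n, |u (1, m) - v (1, m)| ^ p) := by
    intro u v
    rw [Equiv.sum_comp e.symm (fun q => |u q - v q| ^ p), Fintype.sum_prod_type,
      Fin.sum_univ_two]
  have hainj : Function.Injective a := by
    intro i j h
    by_contra hij
    have h2' := congrFun h (e ((0 : Fin 2), i))
    simp only [ha, hav, Equiv.symm_apply_apply] at h2'
    simp [hij, Ne.symm hij] at h2'
    exact absurd h2' (ne_of_gt ha1)
  have hbinj : Function.Injective b := by
    intro i j h
    by_contra hij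
    have h2' := congrFun h (e ((1 : Fin 2), i))
    simp only [hb, hbv, Equiv.symm_apply_apply] at h2'
    simp [hij, Ne.symm hij] at h2'
  have hAA : ∀ i j : Fin n, i ≠ j → ∑ k, |a i k - a j k| ^ p = 2 := by
    intro i j hij
    rw [show (∑ k, |a i k - a j k| ^ p)
        = ∑ k : Fin (2 * n), |av i (e.symm k) - av j (e.symm k)| ^ p from rfl,
      hsplit]
    have h0 : ∀ m : Fin n, |av i ((0 : Fin 2), m) - av j ((0 : Fin 2), m)| ^ p
        = (if m = i then a1 ^ p else if m = j then a1 ^ p else 0) := by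
      intro m
      by_cases h1 : m = i
      · subst h1; simp [hav, hij, Ne.symm hij, abs_of_pos ha1]
      · by_cases h2 : m = j
        · subst h2; simp [hav, h1, abs_of_pos ha1]
        · simp [hav, h1, h2, Real.zero_rpow hpne]
    have h1' : ∀ m : Fin n, |av i ((1 : Fin 2), m) - av j ((1 : Fin 2), m)| ^ p
        = (if m = i then a2 ^ p else if m = j then a2 ^ p else 0) := by
      intro m
      by_cases h1 : m = i
      · subst h1; simp [hav, hij, Ne.symm hij, abs_of_nonneg ha2]
      · by_cases h2 : m = j
        · subst h2; simp [hav, h1, abs_of_nonneg ha2]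
        · simp [hav, h1, h2, Real.zero_rpow hpne]
    rw [Finset.sum_congr rfl fun m _ => h0 m, Finset.sum_congr rfl fun m _ => h1' m,
      sum_ite_two_aux hij, sum_ite_two_aux hij]
    nlinarith [hA]
  have hBB : ∀ i j : Fin n, i ≠ j → ∑ k, |b i k - b j k| ^ p = 2 := by
    intro i j hij
    rw [show (∑ k, |b i k - b j k| ^ p)
        = ∑ k : Fin (2 * n), |bv i (e.symm k) - bv j (e.symm k)| ^ p from rfl,
      hsplit]
    have h0 : ∀ m : Fin n, |bv i ((0 : Fin 2), m) - bv j ((0 : Fin 2), m)| ^ p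
        = (0 : ℝ) := by
      intro m; simp [hbv, Real.zero_rpow hpne]
    have h1' : ∀ m : Fin n, |bv i ((1 : Fin 2), m) - bv j ((1 : Fin 2), m)| ^ p
        = (if m = i then 1 else if m = j then 1 else 0) := by
      intro m
      by_cases h1 : m = i
      · subst h1; simp [hbv, hij, Ne.symm hij]
      · by_cases h2 : m = j
        · subst h2; simp [hbv, h1]
        · simp [hbv, h1, h2, Real.zero_rpow hpne]
    rw [Finset.sum_congr rfl fun m _ => h0 m, Finset.sum_congr rfl fun m _ => h1' m,
      sum_ite_two_aux hij, Finset.sum_const_zero]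
    ring
  have hABeq : ∀ i : Fin n, ∑ k, |a i k - b i k| ^ p
      = (a1 - δ) ^ p + (1 - a2) ^ p + ((n : ℝ) - 1) * δ ^ p := by
    intro i
    rw [show (∑ k, |a i k - b i k| ^ p)
        = ∑ k : Fin (2 * n), |av i (e.symm k) - bv i (e.symm k)| ^ p from rfl,
      hsplit]
    have h0 : ∀ m : Fin n, |av i ((0 : Fin 2), m) - bv i ((0 : Fin 2), m)| ^ p
        = (if m = i then (a1 - δ) ^ p else δ ^ p) := by
      intro m
      by_cases h1 : m = i
      · subst h1; simp [hav, hbv, abs_of_pos (by linarith : (0:ℝ) < a1 - δ)]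
      · simp [hav, hbv, h1, abs_of_pos hδ]
    have h1' : ∀ m : Fin n, |av i ((1 : Fin 2), m) - bv i ((1 : Fin 2), m)| ^ p
        = (if m = i then (1 - a2) ^ p else 0) := by
      intro m
      by_cases h1 : m = i
      · subst h1
        simp [hav, hbv,
          show |a2 - 1| = 1 - a2 from by rw [abs_of_nonpos] <;> linarith]
      · simp [hav, hbv, h1, Real.zero_rpow hpne]
    rw [Finset.sum_congr rfl fun m _ => h0 m, Finset.sum_congr rfl fun m _ => h1' m,
      sum_ite_one_aux, sum_ite_one_aux]
    ring
  have hABne : ∀ i j : Fin n, i ≠ j → ∑ k, |a i k - b j k| ^ p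
      = (a1 - δ) ^ p + a2 ^ p + 1 + ((n : ℝ) - 1) * δ ^ p := by
    intro i j hij
    rw [show (∑ k, |a i k - b j k| ^ p)
        = ∑ k : Fin (2 * n), |av i (e.symm k) - bv j (e.symm k)| ^ p from rfl,
      hsplit]
    have h0 : ∀ m : Fin n, |av i ((0 : Fin 2), m) - bv j ((0 : Fin 2), m)| ^ p
        = (if m = i then (a1 - δ) ^ p else δ ^ p) := by
      intro m
      by_cases h1 : m = i
      · subst h1; simp [hav, hbv, abs_of_pos (by linarith : (0:ℝ) < a1 - δ)]
      · simp [hav, hbv, h1, abs_of_pos hδ]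
    have h1' : ∀ m : Fin n, |av i ((1 : Fin 2), m) - bv j ((1 : Fin 2), m)| ^ p
        = (if m = i then a2 ^ p else if m = j then 1 else 0) := by
      intro m
      by_cases h1 : m = i
      · subst h1; simp [hav, hbv, hij, abs_of_nonneg ha2]
      · by_cases h2 : m = j
        · subst h2; simp [hav, hbv, h1]
        · simp [hav, hbv, h1, h2, Real.zero_rpow hpne]
    rw [Finset.sum_congr rfl fun m _ => h0 m, Finset.sum_congr rfl fun m _ => h1' m,
      sum_ite_one_aux, sum_ite_two_aux hij]
    ring
  refine ⟨Finset.image a Finset.univ, Finset.image b Finset.univ, ?_, ?_, ?_, ?_, ?_⟩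
  · rw [Finset.card_image_of_injective _ hainj, Finset.card_univ, Fintype.card_fin]
  · rw [Finset.card_image_of_injective _ hbinj, Finset.card_univ, Fintype.card_fin]
  · rintro u hu v hv huv
    obtain ⟨i, -, rfl⟩ := Finset.mem_image.mp hu
    obtain ⟨j, -, rfl⟩ := Finset.mem_image.mp hv
    have hij : i ≠ j := fun h => huv (by rw [h])
    rw [hAA i j hij]
  · rintro u hu v hv huv
    obtain ⟨i, -, rfl⟩ := Finset.mem_image.mp hu
    obtain ⟨j, -, rfl⟩ := Finset.mem_image.mp hv
    have hij : i ≠ j := fun h => huv (by rw [h])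
    rw [hBB i j hij]
  · rintro u hu v hv
    obtain ⟨i, -, rfl⟩ := Finset.mem_image.mp hu
    obtain ⟨j, -, rfl⟩ := Finset.mem_image.mp hv
    have hlt : ∑ k, |a i k - b j k| ^ p < 2 := by
      by_cases hij : i = j
      · subst hij; rw [hABeq i]; exact h1
      · rw [hABne i j hij]; exact h2
    have hnn : (0:ℝ) ≤ ∑ k, |a i k - b j k| ^ p :=
      Finset.sum_nonneg fun k _ => Real.rpow_nonneg (abs_nonneg _) p
    exact Real.rpow_lt_rpow hnn hlt (by positivity)

set_option maxHeartbeats 1000000 in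
/-- Upper bound for `L^p` with `1 < p < 2`: for every such `p` and every `n ≥ 1`,
there are sets `A, B ⊆ ℝ^{2n}` of cardinality `n` each such that all distinct inner pairs
are at `ℓp`-distance exactly `2^{1/p}` and all crossing pairs are at `ℓp`-distance
strictly less than `2^{1/p}`. -/
theorem Lp_upper_bound_between_one_and_two (p : ℝ) (hp1 : 1 < p) (hp2 : p < 2)
    (n : ℕ) (hn : 1 ≤ n) :
    ∃ A B : Finset (Fin (2 * n) → ℝ),
      A.card = n ∧ B.card = n ∧
      (∀ u ∈ A, ∀ v ∈ A, u ≠ v →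
        (∑ i, |u i - v i| ^ p) ^ (1 / p) = (2 : ℝ) ^ (1 / p)) ∧
      (∀ u ∈ B, ∀ v ∈ B, u ≠ v →
        (∑ i, |u i - v i| ^ p) ^ (1 / p) = (2 : ℝ) ^ (1 / p)) ∧
      (∀ u ∈ A, ∀ v ∈ B,
        (∑ i, |u i - v i| ^ p) ^ (1 / p) < (2 : ℝ) ^ (1 / p)) := by
  have hp0 : (0:ℝ) < p := by linarith
  have hpne : p ≠ 0 := ne_of_gt hp0
  have hp1' : (0:ℝ) < p - 1 := by linarith
  have hn1 : (1:ℝ) ≤ (n:ℝ) := by exact_mod_cast hn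
  have hnpos : (0:ℝ) < (n:ℝ) := by linarith
  set δ : ℝ := (1/2) * (n:ℝ) ^ (-(1/(p-1))) with hδdef
  have hrpos : (0:ℝ) < (n:ℝ) ^ (-(1/(p-1))) := Real.rpow_pos_of_pos hnpos _
  have hδpos : 0 < δ := by rw [hδdef]; positivity
  have hrle : (n:ℝ) ^ (-(1/(p-1))) ≤ 1 :=
    Real.rpow_le_one_of_one_le_of_nonpos hn1 (by rw [neg_nonpos]; positivity)
  have hδle : δ ≤ 1/2 := by rw [hδdef]; nlinarith
  set a1 : ℝ := 1/2 + δ with ha1def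
  have ha1pos : 0 < a1 := by rw [ha1def]; linarith
  have ha1le : a1 ≤ 1 := by rw [ha1def]; linarith
  have ha1p_le : a1 ^ p ≤ 1 := Real.rpow_le_one (le_of_lt ha1pos) ha1le (le_of_lt hp0)
  have ha1p_pos : 0 < a1 ^ p := Real.rpow_pos_of_pos ha1pos _
  set a2 : ℝ := (1 - a1 ^ p) ^ (1/p) with ha2def
  have hbase : (0:ℝ) ≤ 1 - a1 ^ p := by linarith
  have ha2nonneg : 0 ≤ a2 := Real.rpow_nonneg hbase _
  have ha2le : a2 ≤ 1 := Real.rpow_le_one hbase (by linarith) (by positivity)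
  have hA : a1 ^ p + a2 ^ p = 1 := by
    rw [ha2def, ← Real.rpow_mul hbase, one_div_mul_cancel hpne, Real.rpow_one]; ring
  have hδp1 : δ ^ (p-1) = (1/2:ℝ) ^ (p-1) * ((n:ℝ))⁻¹ := by
    rw [hδdef, Real.mul_rpow (by norm_num) (le_of_lt hrpos),
      ← Real.rpow_mul (le_of_lt hnpos)]
    congr 1
    rw [neg_mul, one_div, inv_mul_cancel₀ (ne_of_gt hp1')]
    exact Real.rpow_neg_one _
  have hδp : δ ^ p = δ ^ (p-1) * δ := by
    rw [show p = (p-1)+1 by ring, Real.rpow_add_one (ne_of_gt hδpos)]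
    ring_nf
  have hhalfpos : (0:ℝ) < (1/2:ℝ) ^ (p-1) := Real.rpow_pos_of_pos (by norm_num) _
  have hhalfp : (1/2:ℝ) ^ p = (1/2:ℝ) ^ (p-1) * (1/2) := by
    rw [show p = (p-1)+1 by ring, Real.rpow_add_one (by norm_num : (1/2:ℝ) ≠ 0)]
    ring_nf
  have hhalflt : (1/2:ℝ) ^ p < 1/2 := by
    have := Real.rpow_lt_rpow_of_exponent_gt (by norm_num : (0:ℝ) < 1/2)
      (by norm_num : (1/2:ℝ) < 1) hp1
    simpa using this
  have hNN : ((n:ℝ) - 1) * ((n:ℝ))⁻¹ < 1 := by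
    have h1 : ((n:ℝ) - 1) * ((n:ℝ))⁻¹ = 1 - ((n:ℝ))⁻¹ := by field_simp
    have h2 : (0:ℝ) < ((n:ℝ))⁻¹ := by positivity
    linarith
  have hNNnn : (0:ℝ) ≤ ((n:ℝ) - 1) * ((n:ℝ))⁻¹ := by
    have : (0:ℝ) ≤ ((n:ℝ))⁻¹ := by positivity
    nlinarith
  have hnd : ((n:ℝ) - 1) * δ ^ p < (1/2:ℝ) ^ (p-1) * δ := by
    rw [hδp, hδp1]
    have hc : (0:ℝ) < (1/2:ℝ) ^ (p-1) * δ := mul_pos hhalfpos hδpos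
    nlinarith
  have hδa1 : a1 - δ = 1/2 := by rw [ha1def]; ring
  have hδδ : (1/2:ℝ) ^ (p-1) * δ ≤ (1/2:ℝ) ^ p := by
    rw [hhalfp]; exact mul_le_mul_of_nonneg_left hδle (le_of_lt hhalfpos)
  have h1 : (a1 - δ) ^ p + (1 - a2) ^ p + ((n : ℝ) - 1) * δ ^ p < 2 := by
    rw [hδa1]
    have h1a : (1 - a2) ^ p ≤ 1 :=
      Real.rpow_le_one (by linarith) (by linarith) (le_of_lt hp0)
    linarith
  have h2 : (a1 - δ) ^ p + a2 ^ p + 1 + ((n : ℝ) - 1) * δ ^ p < 2 := by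
    rw [hδa1]
    have ha2p : a2 ^ p = 1 - a1 ^ p := by linarith
    have hkey : (1/2:ℝ) ^ p + (1/2:ℝ) ^ (p-1) * δ ≤ a1 ^ p := by
      have hmono : (1/2:ℝ) ^ (p-1) ≤ a1 ^ (p-1) :=
        Real.rpow_le_rpow (by norm_num) (by rw [ha1def]; linarith) (by linarith)
      have ha1p' : a1 ^ p = a1 ^ (p-1) * a1 := by
        rw [show p = (p-1)+1 by ring, Real.rpow_add_one (ne_of_gt ha1pos)]
        ring_nf
      have hle2 : (1/2:ℝ) ^ (p-1) * a1 ≤ a1 ^ (p-1) * a1 :=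
        mul_le_mul_of_nonneg_right hmono (le_of_lt ha1pos)
      have hexp : (1/2:ℝ) ^ (p-1) * a1 = (1/2:ℝ) ^ p + (1/2:ℝ) ^ (p-1) * δ := by
        rw [ha1def, hhalfp]; ring
      rw [← ha1p'] at hle2
      linarith
    linarith
  exact key_construction p hp0 n a1 a2 δ ha1pos ha2nonneg hδpos
    (by rw [ha1def]; linarith) ha2le hA h1 h2
end

section
/- Let p ≥ 1 be a real number, N and d positive integers, and let α > β ≥ 0 be real numbers. Suppose A, B ⊆ ℝ^d are sets each of cardinality N such that (i) for any two distinct u, v ∈ A, ‖u−v‖_p > α, (ii) for any two distinct u, v ∈ B, ‖u−v‖_p > α, and (iii) for every u ∈ A and v ∈ B, ‖u−v‖_p ≤ β. Then d ≥ log₅(N), i.e., N ≤ 5^d. -/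
open Finset
open MeasureTheory Set
open scoped ENNReal Pointwise

private theorem lp_tri {p : ℝ} (hp : 1 ≤ p) {d : ℕ} (x y z : Fin d → ℝ) :
    (∑ i, |x i - z i| ^ p) ^ (1/p) ≤
      (∑ i, |x i - y i| ^ p) ^ (1/p) + (∑ i, |y i - z i| ^ p) ^ (1/p) := by
  have := Real.Lp_add_le univ (fun i => x i - y i) (fun i => y i - z i) hp
  simpa using this

private theorem lp_symm (p : ℝ) {d : ℕ} (x y : Fin d → ℝ) :
    (∑ i, |x i - y i| ^ p) ^ (1/p) = (∑ i, |y i - x i| ^ p) ^ (1/p) := by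
  simp [abs_sub_comm]

private theorem lp_cont {p : ℝ} (hp : 0 ≤ p) {d : ℕ} (a : Fin d → ℝ) :
    Continuous fun x : Fin d → ℝ => (∑ i, |x i - a i| ^ p) ^ (1/p) := by
  apply Continuous.rpow_const
  · exact continuous_finset_sum _ fun i _ =>
      (((continuous_apply i).sub continuous_const).abs).rpow_const fun x => Or.inr hp
  · intro x; right; positivity

private theorem lp_hom {p : ℝ} (hp : 1 ≤ p) {d : ℕ} {c : ℝ} (hc : 0 ≤ c) (w : Fin d → ℝ) :
    (∑ i, |c * w i| ^ p) ^ (1/p) = c * (∑ i, |w i| ^ p) ^ (1/p) := by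
  have hp0 : p ≠ 0 := by linarith
  have h1 : ∀ i : Fin d, |c * w i| ^ p = c ^ p * |w i| ^ p := by
    intro i
    rw [abs_mul, abs_of_nonneg hc, Real.mul_rpow hc (abs_nonneg _)]
  rw [Finset.sum_congr rfl fun i _ => h1 i, ← Finset.mul_sum,
    Real.mul_rpow (Real.rpow_nonneg hc p) (by positivity),
    ← Real.rpow_mul hc, mul_one_div, div_self hp0, Real.rpow_one]

private theorem lp_ball_eq {p : ℝ} (hp : 1 ≤ p) {d : ℕ} (a : Fin d → ℝ) {r : ℝ} (hr : 0 < r) :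
    {x : Fin d → ℝ | (∑ i, |x i - a i| ^ p) ^ (1/p) < r}
      = (a +ᵥ r • {x : Fin d → ℝ | (∑ i, |x i| ^ p) ^ (1/p) < 1} : Set (Fin d → ℝ)) := by
  ext x
  rw [Set.mem_vadd_set_iff_neg_vadd_mem, Set.mem_smul_set_iff_inv_smul_mem₀ hr.ne']
  have h : ∀ i, (r⁻¹ • (-a +ᵥ x)) i = r⁻¹ * (x i - a i) := by
    intro i; show r⁻¹ * (-a i + x i) = _; ring
  simp only [Set.mem_setOf_eq]
  rw [show (∑ i, |(r⁻¹ • (-a +ᵥ x)) i| ^ p) = ∑ i, |r⁻¹ * (x i - a i)| ^ p from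
    Finset.sum_congr rfl fun i _ => by rw [h i]]
  rw [show (∑ i, |r⁻¹ * (x i - a i)| ^ p) ^ (1/p)
        = r⁻¹ * (∑ i, |x i - a i| ^ p) ^ (1/p) from lp_hom hp (by positivity) _,
    inv_mul_lt_iff₀ hr, mul_one]

private theorem lp_ball_volume {p : ℝ} (hp : 1 ≤ p) {d : ℕ} (a : Fin d → ℝ) {r : ℝ}
    (hr : 0 < r) :
    volume {x : Fin d → ℝ | (∑ i, |x i - a i| ^ p) ^ (1/p) < r}
      = ENNReal.ofReal (r ^ d)
        * volume {x : Fin d → ℝ | (∑ i, |x i| ^ p) ^ (1/p) < 1} := by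
  rw [lp_ball_eq hp a hr, measure_vadd, Measure.addHaar_smul_of_nonneg volume hr.le,
    Module.finrank_fin_fun]

/-- Lower bound on the biclique sphericity in `L^p`: if `A, B ⊆ ℝ^d` each have `N` points,
all distinct inner pairs are at `ℓp`-distance greater than `α`, and all crossing pairs are at
`ℓp`-distance at most `β`, where `α > β ≥ 0`, then `N ≤ 5^d`, i.e. `d ≥ log₅ N`. -/
theorem Lp_sphericity_lower_bound (p : ℝ) (hp : 1 ≤ p) (N d : ℕ)
    (hN : 0 < N) (hd : 0 < d) (α β : ℝ) (hβ : 0 ≤ β) (hαβ : β < α)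
    (A B : Finset (Fin d → ℝ)) (hA : A.card = N) (hB : B.card = N)
    (hAA : ∀ u ∈ A, ∀ v ∈ A, u ≠ v → α < (∑ i, |u i - v i| ^ p) ^ (1 / p))
    (hBB : ∀ u ∈ B, ∀ v ∈ B, u ≠ v → α < (∑ i, |u i - v i| ^ p) ^ (1 / p))
    (hAB : ∀ u ∈ A, ∀ v ∈ B, (∑ i, |u i - v i| ^ p) ^ (1 / p) ≤ β) :
    N ≤ 5 ^ d := by
  classical
  have hα : 0 < α := lt_of_le_of_lt hβ hαβ
  have hp0 : (0:ℝ) < p := lt_of_lt_of_le one_pos hp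
  set r : ℝ := α / 2 with hrdef
  have hr : 0 < r := by positivity
  set S : Set (Fin d → ℝ) := {x | (∑ i, |x i| ^ p) ^ (1/p) < 1} with hSdef
  -- S is open, nonempty, bounded
  have hScont : Continuous fun x : Fin d → ℝ => (∑ i, |x i| ^ p) ^ (1/p) := by
    have := lp_cont (le_of_lt hp0) (fun _ : Fin d => (0:ℝ))
    simpa using this
  have hSopen : IsOpen S := isOpen_lt hScont continuous_const
  have hS0 : (fun _ : Fin d => (0:ℝ)) ∈ S := by
    simp only [hSdef, Set.mem_setOf_eq]
    rw [show (∑ _i : Fin d, |(0:ℝ)| ^ p) = 0 by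
      simp [Real.zero_rpow (by linarith : p ≠ 0)]]
    rw [Real.zero_rpow (by positivity : (1/p) ≠ 0)]
    norm_num
  have hSpos : 0 < volume S := hSopen.measure_pos volume ⟨_, hS0⟩
  have hSsub : S ⊆ Set.pi Set.univ fun _ : Fin d => Set.Ioo (-1 : ℝ) 1 := by
    intro x hx i _
    by_contra hcon
    have h1 : 1 ≤ |x i| := by
      simp only [Set.mem_Ioo, not_and_or, not_lt] at hcon
      rcases hcon with h | h
      · calc (1:ℝ) ≤ -(x i) := by linarith
          _ ≤ |x i| := neg_le_abs _
      · exact le_trans h (le_abs_self _)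
    have h2 : (1:ℝ) ≤ |x i| ^ p := Real.one_le_rpow h1 (le_of_lt hp0)
    have h3 : (1:ℝ) ≤ ∑ j, |x j| ^ p :=
      le_trans h2 (Finset.single_le_sum (f := fun j => |x j| ^ p)
        (fun j _ => by positivity) (Finset.mem_univ i))
    have h4 : (1:ℝ) ≤ (∑ j, |x j| ^ p) ^ (1/p) :=
      Real.one_le_rpow h3 (by positivity)
    have hx' : (∑ j, |x j| ^ p) ^ (1/p) < 1 := hx
    linarith
  have hSfin : volume S ≠ ⊤ := by
    refine ne_top_of_le_ne_top ?_ (measure_mono hSsub)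
    rw [volume_pi_pi]
    simp [Real.volume_Ioo]
  -- pick a point of B
  obtain ⟨b0, hb0⟩ := Finset.card_pos.mp (hB ▸ hN)
  -- the family of balls
  set f : (Fin d → ℝ) → Set (Fin d → ℝ) :=
    fun a => {x | (∑ i, |x i - a i| ^ p) ^ (1/p) < r} with hfdef
  have hfmeas : ∀ a, MeasurableSet (f a) :=
    fun a => (isOpen_lt (lp_cont (le_of_lt hp0) a) continuous_const).measurableSet
  have hdisj : (↑A : Set (Fin d → ℝ)).PairwiseDisjoint f := by
    intro u hu v hv huv
    simp only [Function.onFun]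
    rw [Set.disjoint_left]
    intro x hxu hxv
    have h1 : (∑ i, |x i - u i| ^ p) ^ (1/p) < r := hxu
    have h2 : (∑ i, |x i - v i| ^ p) ^ (1/p) < r := hxv
    have htri : (∑ i, |u i - v i| ^ p) ^ (1/p)
        ≤ (∑ i, |u i - x i| ^ p) ^ (1/p) + (∑ i, |x i - v i| ^ p) ^ (1/p) :=
      lp_tri hp u x v
    have hsym : (∑ i, |u i - x i| ^ p) ^ (1/p) = (∑ i, |x i - u i| ^ p) ^ (1/p) :=
      lp_symm p u x
    have hlt := hAA u hu v hv huv
    rw [hsym] at htri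
    have hrr : r = α / 2 := hrdef
    linarith
  have hsubset : (⋃ a ∈ A, f a) ⊆ {x | (∑ i, |x i - b0 i| ^ p) ^ (1/p) < β + r} := by
    intro x hx
    simp only [Set.mem_iUnion] at hx
    obtain ⟨a, ha, hxa⟩ := hx
    have h1 : (∑ i, |x i - a i| ^ p) ^ (1/p) < r := hxa
    have h2 : (∑ i, |a i - b0 i| ^ p) ^ (1/p) ≤ β := hAB a ha b0 hb0
    have htri := lp_tri hp x a b0
    show (∑ i, |x i - b0 i| ^ p) ^ (1/p) < β + r
    linarith
  -- measure computation
  have hsum : ∑ a ∈ A, volume (f a) = volume (⋃ a ∈ A, f a) :=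
    (measure_biUnion_finset hdisj fun a _ => hfmeas a).symm
  have hballvol : ∀ a : Fin d → ℝ, volume (f a) = ENNReal.ofReal (r ^ d) * volume S :=
    fun a => lp_ball_volume hp a hr
  have hbigvol : volume {x : Fin d → ℝ | (∑ i, |x i - b0 i| ^ p) ^ (1/p) < β + r}
      = ENNReal.ofReal ((β + r) ^ d) * volume S :=
    lp_ball_volume hp b0 (by positivity)
  have hkey : (N : ℝ≥0∞) * (ENNReal.ofReal (r ^ d) * volume S)
      ≤ ENNReal.ofReal ((β + r) ^ d) * volume S := by
    calc (N : ℝ≥0∞) * (ENNReal.ofReal (r ^ d) * volume S)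
        = ∑ a ∈ A, volume (f a) := by
          rw [Finset.sum_congr rfl fun a _ => hballvol a, Finset.sum_const, hA, nsmul_eq_mul]
      _ = volume (⋃ a ∈ A, f a) := hsum
      _ ≤ volume {x : Fin d → ℝ | (∑ i, |x i - b0 i| ^ p) ^ (1/p) < β + r} :=
          measure_mono hsubset
      _ = ENNReal.ofReal ((β + r) ^ d) * volume S := hbigvol
  rw [← mul_assoc, ENNReal.mul_le_mul_iff_left hSpos.ne' hSfin] at hkey
  have hkey2 : (N : ℝ) * r ^ d ≤ (β + r) ^ d := by
    have h1 : (N : ℝ≥0∞) * ENNReal.ofReal (r ^ d) = ENNReal.ofReal ((N : ℝ) * r ^ d) := by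
      rw [ENNReal.ofReal_mul (by positivity), ENNReal.ofReal_natCast]
    rw [h1] at hkey
    exact (ENNReal.ofReal_le_ofReal_iff (by positivity)).mp hkey
  have hfinal : (N : ℝ) ≤ 5 ^ d := by
    have h5 : (β + r) ^ d ≤ (5 * r) ^ d := by
      apply pow_le_pow_left₀ (by positivity)
      · rw [hrdef]; linarith
    have h6 : (N : ℝ) * r ^ d ≤ 5 ^ d * r ^ d := by
      calc (N : ℝ) * r ^ d ≤ (β + r) ^ d := hkey2
        _ ≤ (5 * r) ^ d := h5
        _ = 5 ^ d * r ^ d := by rw [mul_pow]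
    exact le_of_mul_le_mul_right h6 (by positivity)
  exact_mod_cast hfinal
end

section
/- Let p > 2 be a real number and δ a real number with 0 < δ < 1/4 − 1/2^p. Let C ⊆ {−1,1}^{d'} be a set of n vectors such that any two distinct vectors in C differ in at least (1/2 − δ)·d' coordinates. Let d = 2d', and define A = { (x, 0^{d'}) : x ∈ C } and B = { (0^{d'}, x) : x ∈ C }, both subsets of ℝ^d. Then, with ζ = 2^{p−3}: (i) for any two distinct u, u' ∈ A, ‖u−u'‖_p > ((ζ + 1/2)·d)^{1/p}; (ii) for any two distinct v, v' ∈ B, ‖v−v'‖_p > ((ζ + 1/2)·d)^{1/p}; and (iii) for every u ∈ A and v ∈ B, ‖u−v‖_p = d^{1/p}. -/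
open Finset

lemma sum_pm_aux (p : ℝ) (hp0 : p ≠ 0) {d' : ℕ} (x y : Fin d' → ℝ)
    (hx : ∀ i, x i = -1 ∨ x i = 1) (hy : ∀ i, y i = -1 ∨ y i = 1) :
    ∑ i, |x i - y i| ^ p = (hammingDist x y : ℝ) * 2 ^ p := by
  classical
  have h : ∀ i, |x i - y i| ^ p = if x i = y i then 0 else (2:ℝ) ^ p := by
    intro i
    rcases hx i with h1 | h1 <;> rcases hy i with h2 | h2 <;>
      rw [h1, h2] <;> norm_num [Real.zero_rpow hp0]
  rw [Finset.sum_congr rfl (fun i _ => h i), Finset.sum_ite, Finset.sum_const,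
    Finset.sum_const, smul_zero, zero_add, nsmul_eq_mul, hammingDist]

lemma inner_pair_aux (p : ℝ) (hp : 2 < p) (δ : ℝ) (hδ0 : 0 < δ)
    (hδ1 : δ < 1 / 4 - 1 / 2 ^ p) (d' : ℕ) (ζ : ℝ) (hζ : ζ = 2 ^ (p - 3))
    (x y : Fin d' → ℝ) (hx : ∀ i, x i = -1 ∨ x i = 1) (hy : ∀ i, y i = -1 ∨ y i = 1)
    (hxy : x ≠ y) (hdist : (1 / 2 - δ) * (d' : ℝ) ≤ (hammingDist x y : ℝ)) :
    (ζ + 1 / 2) * (2 * (d' : ℝ)) < ∑ i, |x i - y i| ^ p := by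
  have hp0 : (0:ℝ) < p := by linarith
  rw [sum_pm_aux p hp0.ne' x y hx hy]
  have ht : (0:ℝ) < 2 ^ p := Real.rpow_pos_of_pos two_pos p
  have hζ8 : ζ * 8 = 2 ^ p := by
    rw [hζ, Real.rpow_sub two_pos, show ((3:ℝ) = (3:ℕ)) by norm_num, Real.rpow_natCast]
    ring
  have hd1 : (1:ℝ) ≤ (hammingDist x y : ℝ) := by
    have : 0 < hammingDist x y := hammingDist_pos.mpr hxy
    exact_mod_cast this
  have hd' : (1:ℝ) ≤ (d' : ℝ) := by
    have : 0 < d' := by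
      rcases Function.ne_iff.mp hxy with ⟨i, -⟩
      exact i.pos
    exact_mod_cast this
  have hδt : δ * 2 ^ p < 2 ^ p / 4 - 1 := by
    have h1 : (1 / (2:ℝ) ^ p) * (2:ℝ) ^ p = 1 := by field_simp
    nlinarith [mul_lt_mul_of_pos_right hδ1 ht]
  nlinarith [mul_le_mul_of_nonneg_left hdist ht.le,
    mul_pos (mul_pos hδ0 ht) (sub_pos.mpr (lt_of_lt_of_le one_lt_two (le_refl 2)))]

/-- Code-based construction of a polar pair in `L^p` for `p > 2`: given a set `C` of `n`
vectors in `{-1,1}^{d'}` whose distinct pairs differ in at least `(1/2 - δ)·d'` coordinates,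
where `0 < δ < 1/4 - 1/2^p`, the sets `A = {(x, 0^{d'}) : x ∈ C}` and
`B = {(0^{d'}, x) : x ∈ C}` in `ℝ^{2d'}` satisfy: inner pairs are at `ℓp`-distance more than
`((ζ + 1/2)·d)^{1/p}` with `ζ = 2^{p-3}` and `d = 2d'`, while all crossing pairs are at
`ℓp`-distance exactly `d^{1/p}`. -/
theorem polar_pair_from_code (p : ℝ) (hp : 2 < p) (δ : ℝ) (hδ0 : 0 < δ)
    (hδ1 : δ < 1 / 4 - 1 / 2 ^ p) (d' n : ℕ) (C : Finset (Fin d' → ℝ))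
    (hCcard : C.card = n)
    (hCval : ∀ x ∈ C, ∀ i, x i = -1 ∨ x i = 1)
    (hCdist : ∀ x ∈ C, ∀ y ∈ C, x ≠ y → (1 / 2 - δ) * (d' : ℝ) ≤ (hammingDist x y : ℝ)) :
    ∀ (ζ : ℝ), ζ = 2 ^ (p - 3) →
    ∀ A B : Finset (Fin (d' + d') → ℝ),
      A = C.image (fun x => Fin.append x (0 : Fin d' → ℝ)) →
      B = C.image (fun x => Fin.append (0 : Fin d' → ℝ) x) →
      (∀ u ∈ A, ∀ u' ∈ A, u ≠ u' →
        ((ζ + 1 / 2) * (2 * (d' : ℝ))) ^ (1 / p) < (∑ i, |u i - u' i| ^ p) ^ (1 / p)) ∧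
      (∀ v ∈ B, ∀ v' ∈ B, v ≠ v' →
        ((ζ + 1 / 2) * (2 * (d' : ℝ))) ^ (1 / p) < (∑ i, |v i - v' i| ^ p) ^ (1 / p)) ∧
      (∀ u ∈ A, ∀ v ∈ B,
        (∑ i, |u i - v i| ^ p) ^ (1 / p) = (2 * (d' : ℝ)) ^ (1 / p)) := by
  intro ζ hζ A B hA hB
  have hp0 : (0:ℝ) < p := by linarith
  have hinv : 0 < 1 / p := by positivity
  have hζpos : 0 < ζ := hζ ▸ Real.rpow_pos_of_pos two_pos _
  refine ⟨?_, ?_, ?_⟩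
  · intro u hu u' hu' huu
    rw [hA] at hu hu'
    obtain ⟨x, hxC, rfl⟩ := Finset.mem_image.mp hu
    obtain ⟨y, hyC, rfl⟩ := Finset.mem_image.mp hu'
    have hxy : x ≠ y := fun h => huu (by rw [h])
    have hsum : ∀ i : Fin d', |(0:ℝ) - 0| ^ p = 0 := by
      intro i; simp [Real.zero_rpow hp0.ne']
    have key : (ζ + 1 / 2) * (2 * (d' : ℝ)) <
        ∑ i, |Fin.append x (0 : Fin d' → ℝ) i - Fin.append y (0 : Fin d' → ℝ) i| ^ p := by
      rw [Fin.sum_univ_add]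
      simp only [Fin.append_left, Fin.append_right, Pi.zero_apply, sub_zero, sub_self,
        abs_zero, Real.zero_rpow hp0.ne', Finset.sum_const_zero, add_zero]
      exact inner_pair_aux p hp δ hδ0 hδ1 d' ζ hζ x y (hCval x hxC) (hCval y hyC) hxy
        (hCdist x hxC y hyC hxy)
    exact Real.rpow_lt_rpow (by positivity) key hinv
  · intro u hu u' hu' huu
    rw [hB] at hu hu'
    obtain ⟨x, hxC, rfl⟩ := Finset.mem_image.mp hu
    obtain ⟨y, hyC, rfl⟩ := Finset.mem_image.mp hu'
    have hxy : x ≠ y := fun h => huu (by rw [h])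
    have key : (ζ + 1 / 2) * (2 * (d' : ℝ)) <
        ∑ i, |Fin.append (0 : Fin d' → ℝ) x i - Fin.append (0 : Fin d' → ℝ) y i| ^ p := by
      rw [Fin.sum_univ_add]
      simp only [Fin.append_left, Fin.append_right, Pi.zero_apply, sub_zero, sub_self,
        abs_zero, Real.zero_rpow hp0.ne', Finset.sum_const_zero, zero_add]
      exact inner_pair_aux p hp δ hδ0 hδ1 d' ζ hζ x y (hCval x hxC) (hCval y hyC) hxy
        (hCdist x hxC y hyC hxy)
    exact Real.rpow_lt_rpow (by positivity) key hinv
  · intro u hu v hv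
    rw [hA] at hu; rw [hB] at hv
    obtain ⟨x, hxC, rfl⟩ := Finset.mem_image.mp hu
    obtain ⟨y, hyC, rfl⟩ := Finset.mem_image.mp hv
    have key : ∑ i, |Fin.append x (0 : Fin d' → ℝ) i - Fin.append (0 : Fin d' → ℝ) y i| ^ p
        = 2 * (d' : ℝ) := by
      rw [Fin.sum_univ_add]
      have h1 : ∀ i : Fin d', |x i - 0| ^ p = 1 := by
        intro i
        rcases hCval x hxC i with h | h <;> rw [h] <;> norm_num
      have h2 : ∀ i : Fin d', |(0:ℝ) - y i| ^ p = 1 := by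
        intro i
        rcases hCval y hyC i with h | h <;> rw [h] <;> norm_num
      simp only [Fin.append_left, Fin.append_right, Pi.zero_apply]
      rw [Finset.sum_congr rfl (fun i _ => h1 i), Finset.sum_congr rfl (fun i _ => h2 i)]
      simp; ring
    rw [key]
end

section
/- For every real p > 2 there exists a constant c ≥ 1 such that for all sufficiently large integers n there exist sets A, B ⊆ ℝ^d, each of cardinality n, with d ≤ c·log₂(n), satisfying: (i) for any two distinct u, u' ∈ A, ‖u−u'‖_p > ((2^{p−3} + 1/2)·d)^{1/p}; (ii) for any two distinct v, v' ∈ B, ‖v−v'‖_p > ((2^{p−3} + 1/2)·d)^{1/p}; and (iii) for every u ∈ A and v ∈ B, ‖u−v‖_p = d^{1/p}. -/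
open Finset

section PolarPairAux

lemma polarAux_layer_card_le (m r : ℕ) (x : Fin m → Bool) :
    ({y : Fin m → Bool | hammingDist y x = r} : Finset _).card ≤ m.choose r := by
  classical
  have := Finset.card_le_card_of_injOn
    (f := fun y : Fin m → Bool => ({i | y i ≠ x i} : Finset (Fin m)))
    (s := ({y : Fin m → Bool | hammingDist y x = r} : Finset _))
    (t := Finset.powersetCard r Finset.univ)
    (by
      intro y hy
      simp only [Finset.mem_coe, Finset.mem_filter, Finset.mem_univ, true_and] at hy
      simp only [Finset.mem_coe, Finset.mem_powersetCard]
      exact ⟨Finset.subset_univ _, hy⟩)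
    (by
      intro y hy z hz hyz0
      have hyz : ({i | y i ≠ x i} : Finset (Fin m)) = ({i | z i ≠ x i} : Finset (Fin m)) := hyz0
      funext i
      by_cases hi : y i = x i
      · have : i ∉ ({j | y j ≠ x j} : Finset (Fin m)) := by simp [hi]
        rw [hyz] at this
        simp only [Finset.mem_filter, Finset.mem_univ, true_and, not_not] at this
        rw [hi, this]
      · have : i ∈ ({j | y j ≠ x j} : Finset (Fin m)) := by simp [hi]
        rw [hyz] at this
        simp only [Finset.mem_filter, Finset.mem_univ, true_and] at this
        revert hi this
        cases y i <;> cases z i <;> cases x i <;> simp)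
  simpa [Finset.card_powersetCard] using this

lemma polarAux_ball_card_le (m r : ℕ) (x : Fin m → Bool) :
    ({y : Fin m → Bool | hammingDist y x ≤ r} : Finset _).card
      ≤ ∑ i ∈ Finset.range (r+1), m.choose i := by
  classical
  have h : ({y : Fin m → Bool | hammingDist y x ≤ r} : Finset _)
      = (Finset.range (r+1)).biUnion
          (fun i => ({y : Fin m → Bool | hammingDist y x = i} : Finset _)) := by
    ext y
    simp [Nat.lt_succ_iff]
  rw [h]
  exact le_trans (Finset.card_biUnion_le)
    (Finset.sum_le_sum fun i _ => polarAux_layer_card_le m i x)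

lemma polarAux_exists_code (m r : ℕ) :
    ∀ k : ℕ, k * (∑ i ∈ Finset.range (r+1), m.choose i) ≤ 2^m →
    ∃ S : Finset (Fin m → Bool), S.card = k ∧
      ∀ x ∈ S, ∀ y ∈ S, x ≠ y → r < hammingDist x y := by
  classical
  set V := ∑ i ∈ Finset.range (r+1), m.choose i with hV
  have hV1 : 1 ≤ V := by
    calc 1 = m.choose 0 := (Nat.choose_zero_right m).symm
    _ ≤ V := Finset.single_le_sum (f := fun i => m.choose i) (fun i _ => Nat.zero_le _)
        (Finset.mem_range.2 (Nat.succ_pos r))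
  intro k
  induction k with
  | zero => intro _; exact ⟨∅, by simp⟩
  | succ k ih =>
    intro hk
    have hk' : k * V ≤ 2^m := le_trans (Nat.mul_le_mul_right V (Nat.le_succ k)) hk
    obtain ⟨S, hScard, hSdist⟩ := ih hk'
    set T := S.biUnion (fun x => ({y : Fin m → Bool | hammingDist y x ≤ r} : Finset _)) with hT
    have hTcard : T.card < 2^m := by
      have h1 : T.card ≤ k * V := by
        calc T.card ≤ ∑ x ∈ S, ({y : Fin m → Bool | hammingDist y x ≤ r} : Finset _).card :=
          Finset.card_biUnion_le
        _ ≤ ∑ x ∈ S, V := Finset.sum_le_sum fun x _ => polarAux_ball_card_le m r x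
        _ = k * V := by rw [Finset.sum_const, hScard, smul_eq_mul]
      have h2 : k * V < (k+1) * V := by nlinarith
      omega
    have : ∃ z : Fin m → Bool, z ∉ T := by
      by_contra h
      push_neg at h
      have : (Finset.univ : Finset (Fin m → Bool)).card ≤ T.card :=
        Finset.card_le_card (fun z _ => h z)
      rw [Finset.card_univ] at this
      simp at this
      omega
    obtain ⟨z, hz⟩ := this
    have hzfar : ∀ x ∈ S, r < hammingDist z x := by
      intro x hx
      by_contra hc
      push_neg at hc
      exact hz (Finset.mem_biUnion.2 ⟨x, hx, by simp [hc]⟩)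
    have hzS : z ∉ S := by
      intro hzS
      exact absurd (hzfar z hzS) (by simp [hammingDist_self])
    refine ⟨insert z S, by rw [Finset.card_insert_of_notMem hzS, hScard], ?_⟩
    intro x hx y hy hxy
    rcases Finset.mem_insert.1 hx with hx' | hx' <;>
      rcases Finset.mem_insert.1 hy with hy' | hy'
    · exact absurd (hx'.trans hy'.symm) hxy
    · subst hx'; exact hzfar y hy'
    · subst hy'; rw [hammingDist_comm]; exact hzfar x hx'
    · exact hSdist x hx' y hy' hxy

lemma polarAux_B_lt_two (α : ℝ) (h0 : 0 < α) (h2 : α < 1/2) :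
    (1 + α/(1-α)) * (α/(1-α))^(-α) < 2 := by
  have h1α : 0 < 1 - α := by linarith
  set x := α / (1 - α) with hx
  have hx0 : 0 < x := div_pos h0 h1α
  have hx1 : x < 1 := (div_lt_one h1α).2 (by linarith)
  have h1x : 1 + x = 1 / (1 - α) := by rw [hx]; field_simp; ring
  have hBpos : 0 < (1 + x) * x ^ (-α) := by positivity
  rw [← Real.exp_log hBpos, ← Real.exp_log (by norm_num : (0:ℝ) < 2)]
  apply Real.exp_lt_exp.2
  rw [Real.log_mul (by positivity) (by positivity), Real.log_rpow hx0, h1x,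
    Real.log_div one_ne_zero (ne_of_gt h1α), Real.log_one, hx,
    Real.log_div (ne_of_gt h0) (ne_of_gt h1α)]
  have hne : 1/α ≠ 1/(1-α) := by
    intro h
    have : α = 1 - α := by
      field_simp at h
      linarith
    linarith
  have := strictConcaveOn_log_Ioi.2 (Set.mem_Ioi.2 (by positivity : (0:ℝ) < 1/α))
    (Set.mem_Ioi.2 (by positivity : (0:ℝ) < 1/(1-α))) hne h0 h1α (by ring)
  rw [smul_eq_mul, smul_eq_mul, smul_eq_mul, smul_eq_mul] at this
  have harg : α * (1/α) + (1-α) * (1/(1-α)) = 2 := by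
    field_simp
    norm_num
  rw [harg] at this
  rw [Real.log_div one_ne_zero (ne_of_gt h0), Real.log_div one_ne_zero (ne_of_gt h1α),
    Real.log_one] at this
  linarith

lemma polarAux_binom_sum_le (α : ℝ) (h0 : 0 < α) (h2 : α < 1/2) (m : ℕ) :
    (∑ i ∈ Finset.range (⌊α*m⌋₊+1), (m.choose i : ℝ))
      ≤ ((1 + α/(1-α)) * (α/(1-α))^(-α))^m := by
  have h1α : 0 < 1 - α := by linarith
  set x := α / (1 - α) with hx
  have hx0 : 0 < x := div_pos h0 h1α
  have hx1 : x < 1 := (div_lt_one h1α).2 (by linarith)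
  set r := ⌊α*m⌋₊ with hr
  have hrle : (r:ℝ) ≤ α * m := Nat.floor_le (by positivity)
  have hrm : r ≤ m := by
    have : (r:ℝ) ≤ m := le_trans hrle (by nlinarith [Nat.cast_nonneg (α := ℝ) m])
    exact_mod_cast this
  set S := ∑ i ∈ Finset.range (r+1), (m.choose i : ℝ) with hS
  have hS0 : 0 ≤ S := Finset.sum_nonneg fun i _ => by positivity
  have step1 : S * x^r ≤ ∑ i ∈ Finset.range (r+1), (m.choose i : ℝ) * x^i := by
    rw [hS, Finset.sum_mul]
    apply Finset.sum_le_sum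
    intro i hi
    have hir : i ≤ r := Nat.lt_succ_iff.1 (Finset.mem_range.1 hi)
    have : x^r ≤ x^i := pow_le_pow_of_le_one hx0.le hx1.le hir
    nlinarith [Nat.cast_nonneg (α := ℝ) (m.choose i), pow_nonneg hx0.le r]
  have step2 : ∑ i ∈ Finset.range (r+1), (m.choose i : ℝ) * x^i ≤ (1+x)^m := by
    have hbin : (x + 1)^m = ∑ i ∈ Finset.range (m+1), x^i * 1^(m-i) * (m.choose i : ℝ) :=
      add_pow x 1 m
    simp only [one_pow, mul_one] at hbin
    rw [add_comm 1 x, hbin]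
    simp_rw [mul_comm (x ^ _) ((Nat.choose _ _ : ℕ) : ℝ)] at *
    apply Finset.sum_le_sum_of_subset_of_nonneg
    · exact Finset.range_subset_range.2 (by omega)
    · intro i _ _; positivity
  have hxr : x ^ (α * m) ≤ x ^ (r:ℝ) :=
    Real.rpow_le_rpow_of_exponent_ge hx0 hx1.le hrle
  have hxrr : x ^ (r:ℝ) = x ^ r := Real.rpow_natCast x r
  have key : S * x ^ (α * m) ≤ (1+x)^m := by
    calc S * x ^ (α * m) ≤ S * x ^ (r:ℝ) := by
          apply mul_le_mul_of_nonneg_left hxr hS0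
    _ = S * x^r := by rw [hxrr]
    _ ≤ (1+x)^m := le_trans step1 step2
  have hpow : ((1 + x) * x^(-α))^m = (1+x)^m * x^(-(α*m)) := by
    rw [mul_pow, ← Real.rpow_natCast (x^(-α)) m, ← Real.rpow_mul hx0.le]
    ring_nf
  rw [hpow, Real.rpow_neg hx0.le, ← div_eq_mul_inv,
    le_div_iff₀ (by positivity : (0:ℝ) < x ^ (α*(m:ℝ)))]
  exact key

noncomputable def polarPhiA (m : ℕ) (a : Fin m → Bool) : Fin (m+m) → ℝ :=
  Fin.addCases (fun i => if a i then 1 else -1) (fun _ => 0)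

noncomputable def polarPhiB (m : ℕ) (b : Fin m → Bool) : Fin (m+m) → ℝ :=
  Fin.addCases (fun _ => 0) (fun i => if b i then 1 else -1)

lemma polarPhiA_inj (m : ℕ) : Function.Injective (polarPhiA m) := by
  intro a a' h
  funext i
  have := congrFun h (Fin.castAdd m i)
  simp only [polarPhiA, Fin.addCases_left] at this
  by_contra hne
  cases ha : a i <;> cases ha' : a' i <;> simp_all <;> norm_num at this

lemma polarPhiB_inj (m : ℕ) : Function.Injective (polarPhiB m) := by
  intro a a' h
  funext i
  have := congrFun h (Fin.natAdd m i)
  simp only [polarPhiB, Fin.addCases_right] at this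
  by_contra hne
  cases ha : a i <;> cases ha' : a' i <;> simp_all <;> norm_num at this

lemma polarSumA (p : ℝ) (hp : 0 < p) (m : ℕ) (a a' : Fin m → Bool) :
    ∑ i, |polarPhiA m a i - polarPhiA m a' i| ^ p = (hammingDist a a' : ℝ) * (2:ℝ)^p := by
  rw [Fin.sum_univ_add]
  have h1 : ∀ i : Fin m,
      |polarPhiA m a (Fin.castAdd m i) - polarPhiA m a' (Fin.castAdd m i)| ^ p
      = if a i ≠ a' i then (2:ℝ)^p else 0 := by
    intro i
    simp only [polarPhiA, Fin.addCases_left]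
    cases ha : a i <;> cases ha' : a' i <;>
      simp [Real.rpow_natCast] <;> norm_num [Real.zero_rpow (ne_of_gt hp)]
  have h2 : ∀ i : Fin m,
      |polarPhiA m a (Fin.natAdd m i) - polarPhiA m a' (Fin.natAdd m i)| ^ p = 0 := by
    intro i
    simp only [polarPhiA, Fin.addCases_right]
    simp [Real.zero_rpow (ne_of_gt hp)]
  rw [Finset.sum_congr rfl (fun i _ => h1 i), Finset.sum_congr rfl (fun i _ => h2 i)]
  rw [Finset.sum_const_zero, add_zero, Finset.sum_ite, Finset.sum_const_zero,
    Finset.sum_const, add_zero, hammingDist]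
  simp [mul_comm]

lemma polarSumB (p : ℝ) (hp : 0 < p) (m : ℕ) (a a' : Fin m → Bool) :
    ∑ i, |polarPhiB m a i - polarPhiB m a' i| ^ p = (hammingDist a a' : ℝ) * (2:ℝ)^p := by
  rw [Fin.sum_univ_add]
  have h1 : ∀ i : Fin m,
      |polarPhiB m a (Fin.castAdd m i) - polarPhiB m a' (Fin.castAdd m i)| ^ p = 0 := by
    intro i
    simp only [polarPhiB, Fin.addCases_left]
    simp [Real.zero_rpow (ne_of_gt hp)]
  have h2 : ∀ i : Fin m,
      |polarPhiB m a (Fin.natAdd m i) - polarPhiB m a' (Fin.natAdd m i)| ^ p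
      = if a i ≠ a' i then (2:ℝ)^p else 0 := by
    intro i
    simp only [polarPhiB, Fin.addCases_right]
    cases ha : a i <;> cases ha' : a' i <;>
      simp [Real.rpow_natCast] <;> norm_num [Real.zero_rpow (ne_of_gt hp)]
  rw [Finset.sum_congr rfl (fun i _ => h1 i), Finset.sum_congr rfl (fun i _ => h2 i)]
  rw [Finset.sum_const_zero, zero_add, Finset.sum_ite, Finset.sum_const_zero,
    Finset.sum_const, add_zero, hammingDist]
  simp [mul_comm]

lemma polarSumCross (p : ℝ) (m : ℕ) (a b : Fin m → Bool) :
    ∑ i, |polarPhiA m a i - polarPhiB m b i| ^ p = ((m + m : ℕ) : ℝ) := by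
  rw [Fin.sum_univ_add]
  have h1 : ∀ i : Fin m,
      |polarPhiA m a (Fin.castAdd m i) - polarPhiB m b (Fin.castAdd m i)| ^ p = 1 := by
    intro i
    simp only [polarPhiA, polarPhiB, Fin.addCases_left]
    cases ha : a i <;> norm_num
  have h2 : ∀ i : Fin m,
      |polarPhiA m a (Fin.natAdd m i) - polarPhiB m b (Fin.natAdd m i)| ^ p = 1 := by
    intro i
    simp only [polarPhiA, polarPhiB, Fin.addCases_right]
    cases hb : b i <;> norm_num
  rw [Finset.sum_congr rfl (fun i _ => h1 i), Finset.sum_congr rfl (fun i _ => h2 i)]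
  push_cast
  simp

end PolarPairAux

/-- For every `p > 2` there is a constant `c ≥ 1` such that for all sufficiently large `n`
there exist sets `A, B ⊆ ℝ^d` of cardinality `n` each, with `d ≤ c·log₂ n`, whose distinct
inner pairs are at `ℓp`-distance more than `((2^{p-3} + 1/2)·d)^{1/p}` and whose crossing
pairs are at `ℓp`-distance exactly `d^{1/p}`. -/
theorem polar_pair_logarithmic_dimension (p : ℝ) (hp : 2 < p) :
    ∃ c : ℝ, 1 ≤ c ∧ ∃ n₀ : ℕ, ∀ n : ℕ, n₀ ≤ n →
      ∃ (d : ℕ) (A B : Finset (Fin d → ℝ)),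
        (d : ℝ) ≤ c * Real.logb 2 (n : ℝ) ∧
        A.card = n ∧ B.card = n ∧
        (∀ u ∈ A, ∀ u' ∈ A, u ≠ u' →
          (((2 : ℝ) ^ (p - 3) + 1 / 2) * (d : ℝ)) ^ (1 / p)
            < (∑ i, |u i - u' i| ^ p) ^ (1 / p)) ∧
        (∀ v ∈ B, ∀ v' ∈ B, v ≠ v' →
          (((2 : ℝ) ^ (p - 3) + 1 / 2) * (d : ℝ)) ^ (1 / p)
            < (∑ i, |v i - v' i| ^ p) ^ (1 / p)) ∧
        (∀ u ∈ A, ∀ v ∈ B,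
          (∑ i, |u i - v i| ^ p) ^ (1 / p) = (d : ℝ) ^ (1 / p)) := by
  classical
  have hp0 : 0 < p := by linarith
  set α : ℝ := 1/4 + (2:ℝ)^(-p) with hα
  have hα0 : 0 < α := by positivity
  have h22 : (2:ℝ)^(-2:ℝ) = 1/4 := by
    rw [show (-2:ℝ) = ((-2 : ℤ) : ℝ) by norm_num, Real.rpow_intCast]
    norm_num
  have h2p : (2:ℝ)^(-p) < 1/4 := by
    rw [← h22]
    exact Real.rpow_lt_rpow_of_exponent_lt (by norm_num) (by linarith)
  have hα2 : α < 1/2 := by rw [hα]; linarith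
  have h1α : 0 < 1 - α := by simp only [hα]; linarith
  set B : ℝ := (1 + α/(1-α)) * (α/(1-α))^(-α) with hB
  have hBpos : 0 < B := by positivity
  have hB2 : B < 2 := polarAux_B_lt_two α hα0 hα2
  set γ : ℝ := Real.logb 2 (2/B) with hγdef
  have hγ : 0 < γ := Real.logb_pos (by norm_num) ((one_lt_div hBpos).2 hB2)
  refine ⟨2/γ + 2, by have h2γ : 0 < 2/γ := div_pos (by norm_num) hγ; linarith, 2, ?_⟩
  intro n hn
  have hn2 : (2:ℝ) ≤ n := by exact_mod_cast hn
  have hn0 : (0:ℝ) < n := by linarith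
  set L : ℝ := Real.logb 2 n with hLdef
  have hL1 : 1 ≤ L := by
    rw [hLdef, show (1:ℝ) = Real.logb 2 2 from (Real.logb_self_eq_one (by norm_num)).symm]
    exact Real.logb_le_logb_of_le (by norm_num) (by norm_num) hn2
  set m : ℕ := ⌈L/γ⌉₊ with hm
  have hmle : (m:ℝ) ≤ L/γ + 1 := (Nat.ceil_lt_add_one (by positivity)).le
  have hmge : L/γ ≤ (m:ℝ) := Nat.le_ceil _
  set r : ℕ := ⌊α*(m:ℝ)⌋₊ with hr
  set V : ℕ := ∑ i ∈ Finset.range (r+1), Nat.choose m i with hV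
  have hcond : n * V ≤ 2^m := by
    have h1 : (V:ℝ) ≤ B^m := by
      have := polarAux_binom_sum_le α hα0 hα2 m
      rw [hV]
      push_cast
      exact this
    have h2 : (n:ℝ) ≤ (2/B)^m := by
      have e1 : ((2/B):ℝ)^m = (2:ℝ)^(γ*(m:ℝ)) := by
        rw [Real.rpow_mul (by norm_num : (0:ℝ) ≤ 2),
          Real.rpow_logb (by norm_num) (by norm_num) (by positivity),
          Real.rpow_natCast]
      have e2 : (n:ℝ) = (2:ℝ)^L := (Real.rpow_logb (by norm_num) (by norm_num) hn0).symm
      rw [e1, e2]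
      apply Real.rpow_le_rpow_of_exponent_le (by norm_num)
      calc L = (L/γ)*γ := by field_simp
      _ ≤ (m:ℝ)*γ := mul_le_mul_of_nonneg_right hmge hγ.le
      _ = γ*(m:ℝ) := mul_comm _ _
    have hreal : ((n * V : ℕ) : ℝ) ≤ ((2^m : ℕ) : ℝ) := by
      push_cast
      calc (n:ℝ)*V ≤ (2/B)^m * B^m :=
        mul_le_mul h2 h1 (by positivity) (by positivity)
      _ = 2^m := by
        rw [← mul_pow, div_mul_cancel₀ _ (ne_of_gt hBpos)]
    exact_mod_cast hreal
  obtain ⟨S, hScard, hSdist⟩ := polarAux_exists_code m r n hcond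
  have hdistR : ∀ a ∈ S, ∀ a' ∈ S, a ≠ a' → α * (m:ℝ) < (hammingDist a a' : ℝ) := by
    intro a ha a' ha' hne
    have h := hSdist a ha a' ha' hne
    have h1 : (r:ℝ) + 1 ≤ (hammingDist a a' : ℝ) := by exact_mod_cast h
    have hfl : α*(m:ℝ) < (r:ℝ) + 1 := Nat.lt_floor_add_one _
    linarith
  have h2ppos : (0:ℝ) < (2:ℝ)^p := Real.rpow_pos_of_pos (by norm_num) p
  have keyconst : ((2:ℝ)^(p-3) + 1/2) * (((m+m : ℕ)):ℝ) = (α * (m:ℝ)) * (2:ℝ)^p := by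
    have e1 : (2:ℝ)^(-p) * (2:ℝ)^p = 1 := by
      rw [← Real.rpow_add (by norm_num : (0:ℝ) < 2)]
      norm_num
    have e2 : (2:ℝ)^(p-3) * 2 = (2:ℝ)^(p-2) := by
      nth_rewrite 2 [show (2:ℝ) = (2:ℝ)^(1:ℝ) from (Real.rpow_one 2).symm]
      rw [← Real.rpow_add (by norm_num : (0:ℝ) < 2)]
      congr 1
      ring
    have e3 : (2:ℝ)^(p-2) = (2:ℝ)^p / 4 := by
      rw [Real.rpow_sub (by norm_num : (0:ℝ) < 2), show ((2:ℝ)^(2:ℝ)) = 4 by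
        rw [show (2:ℝ) = ((2:ℕ):ℝ) by norm_num, Real.rpow_natCast]; norm_num]
    push_cast
    rw [hα]
    nlinarith [e1, e2, e3]
  have hinner : ∀ a ∈ S, ∀ a' ∈ S, a ≠ a' →
      ((2:ℝ)^(p-3) + 1/2) * (((m+m:ℕ)):ℝ) < (hammingDist a a' : ℝ) * (2:ℝ)^p := by
    intro a ha a' ha' hne
    rw [keyconst]
    exact mul_lt_mul_of_pos_right (hdistR a ha a' ha' hne) h2ppos
  refine ⟨m+m, S.image (polarPhiA m), S.image (polarPhiB m), ?_, ?_, ?_, ?_, ?_, ?_⟩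
  · push_cast
    have h2L : (2:ℝ) ≤ 2*L := by linarith
    calc ((m:ℝ) + (m:ℝ)) ≤ 2*(L/γ + 1) := by linarith
    _ = (2/γ)*L + 2 := by field_simp
    _ ≤ (2/γ)*L + 2*L := by linarith
    _ = (2/γ + 2)*L := by ring
  · rw [Finset.card_image_of_injective _ (polarPhiA_inj m), hScard]
  · rw [Finset.card_image_of_injective _ (polarPhiB_inj m), hScard]
  · intro u hu u' hu' hne
    obtain ⟨a, ha, rfl⟩ := Finset.mem_image.1 hu
    obtain ⟨a', ha', rfl⟩ := Finset.mem_image.1 hu'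
    have hne' : a ≠ a' := fun h => hne (by rw [h])
    rw [polarSumA p hp0 m a a']
    exact Real.rpow_lt_rpow (by positivity) (hinner a ha a' ha' hne') (by positivity)
  · intro v hv v' hv' hne
    obtain ⟨a, ha, rfl⟩ := Finset.mem_image.1 hv
    obtain ⟨a', ha', rfl⟩ := Finset.mem_image.1 hv'
    have hne' : a ≠ a' := fun h => hne (by rw [h])
    rw [polarSumB p hp0 m a a']
    exact Real.rpow_lt_rpow (by positivity) (hinner a ha a' ha' hne') (by positivity)
  · intro u hu v hv
    obtain ⟨a, ha, rfl⟩ := Finset.mem_image.1 hu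
    obtain ⟨b, hb, rfl⟩ := Finset.mem_image.1 hv
    rw [polarSumCross p m a b]
end

section
/- Let d be a positive integer. For u ∈ {0,1}^d define a(u) ∈ ℝ^d by a(u)_j = 2·u_j, and for w ∈ {0,1}^d define b(w) ∈ ℝ^d by b(w)_j = 1 − 2·w_j. Then: (i) for any distinct u, u' ∈ {0,1}^d, ‖a(u) − a(u')‖_∞ ≥ 2, and for any distinct w, w' ∈ {0,1}^d, ‖b(w) − b(w')‖_∞ ≥ 2; (ii) for any u, w ∈ {0,1}^d, if Σ_{j=1}^d u_j·w_j = 0 then ‖a(u) − b(w)‖_∞ = 1; (iii) for any u, w ∈ {0,1}^d, if Σ_{j=1}^d u_j·w_j ≠ 0 then ‖a(u) − b(w)‖_∞ = 3. -/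
open Finset

lemma fin2_cases (x : Fin 2) : (x : ℕ) = 0 ∨ (x : ℕ) = 1 := by
  omega

/-- The OV-to-Closest-Pair gadget in `L^∞`: mapping `u ∈ {0,1}^d` to `a(u) = 2u` and
`w ∈ {0,1}^d` to `b(w) = 1 - 2w`, distinct inner pairs are at `ℓ∞`-distance at least `2`,
orthogonal crossing pairs are at `ℓ∞`-distance exactly `1`, and non-orthogonal crossing
pairs are at `ℓ∞`-distance exactly `3`. -/
theorem ov_gadget_Linf (d : ℕ) (hd : 0 < d)
    (a b : (Fin d → Fin 2) → (Fin d → ℝ))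
    (ha : ∀ u j, a u j = 2 * ((u j : ℕ) : ℝ))
    (hb : ∀ w j, b w j = 1 - 2 * ((w j : ℕ) : ℝ)) :
    ((∀ u u' : Fin d → Fin 2, u ≠ u' → 2 ≤ ⨆ j, |a u j - a u' j|) ∧
     (∀ w w' : Fin d → Fin 2, w ≠ w' → 2 ≤ ⨆ j, |b w j - b w' j|)) ∧
    (∀ u w : Fin d → Fin 2,
      (∑ j, (u j : ℕ) * (w j : ℕ)) = 0 → (⨆ j, |a u j - b w j|) = 1) ∧
    (∀ u w : Fin d → Fin 2,
      (∑ j, (u j : ℕ) * (w j : ℕ)) ≠ 0 → (⨆ j, |a u j - b w j|) = 3) := by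
  haveI : Nonempty (Fin d) := ⟨⟨0, hd⟩⟩
  refine ⟨⟨?_, ?_⟩, ?_, ?_⟩
  · intro u u' huu
    obtain ⟨j, hj⟩ := Function.ne_iff.mp huu
    have h2 : (2 : ℝ) ≤ |a u j - a u' j| := by
      rw [ha, ha]
      rcases fin2_cases (u j) with h1 | h1 <;> rcases fin2_cases (u' j) with h2 | h2 <;>
        first
        | (exfalso; exact hj (Fin.ext (by omega)))
        | (rw [h1, h2]; norm_num)
    exact h2.trans (le_ciSup (f := fun j => |a u j - a u' j|) (Set.Finite.bddAbove (Set.finite_range _)) j)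
  · intro w w' hww
    obtain ⟨j, hj⟩ := Function.ne_iff.mp hww
    have h2 : (2 : ℝ) ≤ |b w j - b w' j| := by
      rw [hb, hb]
      rcases fin2_cases (w j) with h1 | h1 <;> rcases fin2_cases (w' j) with h2 | h2 <;>
        first
        | (exfalso; exact hj (Fin.ext (by omega)))
        | (rw [h1, h2]; norm_num)
    exact h2.trans (le_ciSup (f := fun j => |b w j - b w' j|) (Set.Finite.bddAbove (Set.finite_range _)) j)
  · intro u w horth
    have hall : ∀ j, |a u j - b w j| = 1 := by
      intro j
      have hj : (u j : ℕ) * (w j : ℕ) = 0 :=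
        (Finset.sum_eq_zero_iff.mp horth) j (Finset.mem_univ j)
      rw [ha, hb]
      rcases fin2_cases (u j) with h1 | h1 <;> rcases fin2_cases (w j) with h2 | h2 <;>
        first | (rw [h1, h2]; norm_num; done) | (rw [h1, h2] at hj; simp at hj)
    calc (⨆ j, |a u j - b w j|) = ⨆ _ : Fin d, (1 : ℝ) := by
            congr 1; funext j; exact hall j
      _ = 1 := ciSup_const
  · intro u w horth
    obtain ⟨j, -, hj⟩ := Finset.exists_ne_zero_of_sum_ne_zero horth
    have hj3 : |a u j - b w j| = 3 := by
      rw [ha, hb]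
      rcases fin2_cases (u j) with h1 | h1 <;> rcases fin2_cases (w j) with h2 | h2 <;>
        first | (rw [h1, h2]; norm_num; done) | (rw [h1, h2] at hj; simp at hj)
    apply le_antisymm
    · apply ciSup_le
      intro i
      rw [ha, hb]
      rcases fin2_cases (u i) with h1 | h1 <;> rcases fin2_cases (w i) with h2 | h2 <;>
        rw [h1, h2] <;> norm_num
    · rw [← hj3]
      exact le_ciSup (f := fun j => |a u j - b w j|) (Set.Finite.bddAbove (Set.finite_range _)) j
end

section
/- Let n and d be positive integers, and let α > β ≥ 0 be real numbers. Suppose A, B ⊆ ℝ^d are sets each of cardinality n such that (i) for any two distinct u, v ∈ A, ‖u−v‖₂ > α, (ii) for any two distinct u, v ∈ B, ‖u−v‖₂ > α, and (iii) for every u ∈ A and v ∈ B, ‖u−v‖₂ ≤ β. Then d ≥ (n−3)/2. -/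
open Finset

private lemma sum_sq_nonneg' {d : ℕ} (u v : Fin d → ℝ) : 0 ≤ ∑ i, (u i - v i) ^ 2 :=
  Finset.sum_nonneg fun _ _ => sq_nonneg _

private lemma sum_sq_symm' {d : ℕ} (u v : Fin d → ℝ) :
    ∑ i, (u i - v i) ^ 2 = ∑ i, (v i - u i) ^ 2 :=
  Finset.sum_congr rfl fun i _ => by ring

/-- One-dimensional barycenter identity. -/
private lemma oneDim {E : Type*} (s : Finset E) (w : E → ℝ) (hw : ∑ x ∈ s, w x = 1)
    (g : E → ℝ) (c q : ℝ) (hc : c = ∑ x ∈ s, w x * g x) :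
    ∑ x ∈ s, w x * (g x - q) ^ 2 = (c - q) ^ 2 + ∑ x ∈ s, w x * (g x - c) ^ 2 := by
  have expand : ∀ r : ℝ, ∑ x ∈ s, w x * (g x - r) ^ 2
      = ((∑ x ∈ s, w x * g x ^ 2) - 2 * r * (∑ x ∈ s, w x * g x)) + r ^ 2 * (∑ x ∈ s, w x) := by
    intro r
    rw [Finset.mul_sum, Finset.mul_sum, ← Finset.sum_sub_distrib, ← Finset.sum_add_distrib]
    exact Finset.sum_congr rfl fun x _ => by ring
  rw [expand q, expand c, hw, ← hc]
  ring

/-- Barycenter identity for sums of squared coordinate differences. -/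
private lemma key_identity {d : ℕ} (s : Finset (Fin d → ℝ)) (w : (Fin d → ℝ) → ℝ)
    (hw : ∑ x ∈ s, w x = 1) (z q : Fin d → ℝ)
    (hz : ∀ j, z j = ∑ x ∈ s, w x * x j) :
    ∑ x ∈ s, w x * (∑ i, (x i - q i) ^ 2)
      = (∑ i, (z i - q i) ^ 2) + ∑ x ∈ s, w x * (∑ i, (x i - z i) ^ 2) := by
  have swap : ∀ p : Fin d → ℝ, ∑ x ∈ s, w x * (∑ i, (x i - p i) ^ 2)
      = ∑ i, ∑ x ∈ s, w x * (x i - p i) ^ 2 := by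
    intro p
    rw [← Finset.sum_comm]
    exact Finset.sum_congr rfl fun x _ => by rw [Finset.mul_sum]
  rw [swap q, swap z, ← Finset.sum_add_distrib]
  exact Finset.sum_congr rfl fun i _ => oneDim s w hw (fun x => x i) (z i) (q i) (hz i)

/-- Radon-type partition data for a finset of at least `d+2` points in `ℝ^d`. -/
private lemma radon_data {d : ℕ} (s : Finset (Fin d → ℝ)) (hs : d + 2 ≤ s.card) :
    ∃ (s₁ s₂ : Finset (Fin d → ℝ)) (w₁ w₂ : (Fin d → ℝ) → ℝ) (z : Fin d → ℝ),
      s₁ ⊆ s ∧ s₂ ⊆ s ∧ Disjoint s₁ s₂ ∧ s₁.Nonempty ∧ s₂.Nonempty ∧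
      (∀ x ∈ s₁, 0 < w₁ x) ∧ (∀ x ∈ s₂, 0 < w₂ x) ∧
      (∑ x ∈ s₁, w₁ x = 1) ∧ (∑ x ∈ s₂, w₂ x = 1) ∧
      (∀ j, z j = ∑ x ∈ s₁, w₁ x * x j) ∧ (∀ j, z j = ∑ x ∈ s₂, w₂ x * x j) := by
  classical
  have hrank : Module.finrank ℝ (Fin d → ℝ) + 1 < s.card := by
    rw [Module.finrank_fin_fun]; omega
  obtain ⟨c, hc1, hc0, x₀, hx₀s, hx₀⟩ :=
    Module.exists_nontrivial_relation_sum_zero_of_finrank_succ_lt_card hrank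
  set s₁ := s.filter (fun x => 0 < c x) with hs₁def
  set s₂ := s.filter (fun x => c x < 0) with hs₂def
  have hsplit : ∀ f : (Fin d → ℝ) → ℝ, (∀ x ∈ s, c x = 0 → f x = 0) →
      ∑ x ∈ s, f x = ∑ x ∈ s₁, f x + ∑ x ∈ s₂, f x := by
    intro f hf
    rw [← Finset.sum_filter_add_sum_filter_not s (fun x => 0 < c x) f]
    congr 1
    rw [← Finset.sum_filter_add_sum_filter_not (s.filter (fun x => ¬ 0 < c x))
      (fun x => c x < 0) f]
    have h1 : (s.filter (fun x => ¬ 0 < c x)).filter (fun x => c x < 0) = s₂ := by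
      rw [Finset.filter_filter, hs₂def]
      exact Finset.filter_congr fun x _ => ⟨fun h => h.2, fun h => ⟨not_lt.mpr h.le, h⟩⟩
    have h2 : ∑ x ∈ (s.filter (fun x => ¬ 0 < c x)).filter (fun x => ¬ c x < 0), f x = 0 := by
      refine Finset.sum_eq_zero fun x hx => ?_
      rw [Finset.mem_filter, Finset.mem_filter] at hx
      exact hf x hx.1.1 (le_antisymm (not_lt.mp hx.1.2) (not_lt.mp hx.2))
    rw [h1, h2, add_zero]
  have hsum : ∑ x ∈ s₁, c x + ∑ x ∈ s₂, c x = 0 := by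
    rw [← hsplit c (fun x _ h => h)]; exact hc0
  have hvec : ∀ j, ∑ x ∈ s₁, c x * x j + ∑ x ∈ s₂, c x * x j = 0 := by
    intro j
    have h := congrFun hc1 j
    rw [Finset.sum_apply] at h
    simp only [Pi.smul_apply, smul_eq_mul, Pi.zero_apply] at h
    rw [← hsplit (fun x => c x * x j) (fun x _ h0 => by simp [h0])]
    simpa using h
  have h₁pos : ∀ x ∈ s₁, 0 < c x := fun x hx => (Finset.mem_filter.mp hx).2
  have h₂neg : ∀ x ∈ s₂, c x < 0 := fun x hx => (Finset.mem_filter.mp hx).2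
  have hone : s₁.Nonempty ∨ s₂.Nonempty := by
    rcases lt_or_gt_of_ne hx₀ with h | h
    · exact Or.inr ⟨x₀, Finset.mem_filter.mpr ⟨hx₀s, h⟩⟩
    · exact Or.inl ⟨x₀, Finset.mem_filter.mpr ⟨hx₀s, h⟩⟩
  have hP : 0 < ∑ x ∈ s₁, c x := by
    rcases hone with h | h
    · exact Finset.sum_pos h₁pos h
    · have hN : ∑ x ∈ s₂, c x < 0 := Finset.sum_neg h₂neg h
      linarith
  have hN : ∑ x ∈ s₂, c x < 0 := by linarith
  have hs₁ne : s₁.Nonempty := Finset.nonempty_of_sum_ne_zero (ne_of_gt hP)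
  have hs₂ne : s₂.Nonempty := Finset.nonempty_of_sum_ne_zero (ne_of_lt hN)
  set P := ∑ x ∈ s₁, c x with hPdef
  refine ⟨s₁, s₂, fun x => c x / P, fun x => -c x / P, fun j => ∑ x ∈ s₁, (c x / P) * x j,
    Finset.filter_subset _ _, Finset.filter_subset _ _, ?_, hs₁ne, hs₂ne, ?_, ?_, ?_, ?_, ?_, ?_⟩
  · rw [Finset.disjoint_left]
    intro a ha ha'
    exact absurd (h₂neg a ha') (not_lt.mpr (h₁pos a ha).le)
  · exact fun x hx => div_pos (h₁pos x hx) hP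
  · exact fun x hx => div_pos (by linarith [h₂neg x hx]) hP
  · rw [← Finset.sum_div, ← hPdef, div_self (ne_of_gt hP)]
  · rw [← Finset.sum_div]
    have : ∑ x ∈ s₂, -c x = P := by
      rw [Finset.sum_neg_distrib]
      linarith
    rw [this, div_self (ne_of_gt hP)]
  · intro j; rfl
  · intro j
    show ∑ x ∈ s₁, c x / P * x j = ∑ x ∈ s₂, -c x / P * x j
    have e1 : ∑ x ∈ s₁, c x / P * x j = (∑ x ∈ s₁, c x * x j) / P := by
      rw [Finset.sum_div]
      exact Finset.sum_congr rfl fun x _ => by ring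
    have e2 : ∑ x ∈ s₂, -c x / P * x j = (-∑ x ∈ s₂, c x * x j) / P := by
      rw [← Finset.sum_neg_distrib, Finset.sum_div]
      exact Finset.sum_congr rfl fun x _ => by ring
    rw [e1, e2]
    congr 1
    linarith [hvec j]

/-- Lower bound on the biclique sphericity in `L^2`: if `A, B ⊆ ℝ^d` each have `n` points,
all distinct inner pairs are at Euclidean distance greater than `α`, and all crossing pairs
are at Euclidean distance at most `β`, where `α > β ≥ 0`, then `d ≥ (n - 3)/2`. -/
theorem L2_sphericity_lower_bound (n d : ℕ) (hn : 0 < n) (hd : 0 < d)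
    (α β : ℝ) (hβ : 0 ≤ β) (hαβ : β < α)
    (A B : Finset (Fin d → ℝ)) (hA : A.card = n) (hB : B.card = n)
    (hAA : ∀ u ∈ A, ∀ v ∈ A, u ≠ v → α < Real.sqrt (∑ i, (u i - v i) ^ 2))
    (hBB : ∀ u ∈ B, ∀ v ∈ B, u ≠ v → α < Real.sqrt (∑ i, (u i - v i) ^ 2))
    (hAB : ∀ u ∈ A, ∀ v ∈ B, Real.sqrt (∑ i, (u i - v i) ^ 2) ≤ β) :
    ((n : ℝ) - 3) / 2 ≤ (d : ℝ) := by
  rcases le_or_gt n (d + 1) with hnd | hnd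
  · have h1 : (n : ℝ) ≤ (d : ℝ) + 1 := by exact_mod_cast hnd
    have h2 : (1 : ℝ) ≤ (d : ℝ) := by exact_mod_cast hd
    linarith
  exfalso
  have hα : 0 < α := lt_of_le_of_lt hβ hαβ
  -- squared-distance versions of the hypotheses
  have sq_of_lt : ∀ u v : Fin d → ℝ, α < Real.sqrt (∑ i, (u i - v i) ^ 2) →
      α ^ 2 < ∑ i, (u i - v i) ^ 2 := by
    intro u v h
    nlinarith [Real.sq_sqrt (sum_sq_nonneg' u v), Real.sqrt_nonneg (∑ i, (u i - v i) ^ 2)]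
  have hAA' : ∀ u ∈ A, ∀ v ∈ A, u ≠ v → α ^ 2 < ∑ i, (u i - v i) ^ 2 :=
    fun u hu v hv huv => sq_of_lt u v (hAA u hu v hv huv)
  have hBB' : ∀ u ∈ B, ∀ v ∈ B, u ≠ v → α ^ 2 < ∑ i, (u i - v i) ^ 2 :=
    fun u hu v hv huv => sq_of_lt u v (hBB u hu v hv huv)
  have hAB' : ∀ u ∈ A, ∀ v ∈ B, ∑ i, (u i - v i) ^ 2 ≤ β ^ 2 := by
    intro u hu v hv
    have h := hAB u hu v hv
    nlinarith [Real.sq_sqrt (sum_sq_nonneg' u v), Real.sqrt_nonneg (∑ i, (u i - v i) ^ 2)]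
  -- convex combination bounds
  have combo_lt : ∀ (t : Finset (Fin d → ℝ)) (w : (Fin d → ℝ) → ℝ) (g : (Fin d → ℝ) → ℝ)
      (r : ℝ), (∀ x ∈ t, 0 < w x) → (∑ x ∈ t, w x = 1) → t.Nonempty →
      (∀ x ∈ t, r < g x) → r < ∑ x ∈ t, w x * g x := by
    intro t w g r hw hw1 ht hg
    have : ∑ x ∈ t, w x * r < ∑ x ∈ t, w x * g x :=
      Finset.sum_lt_sum_of_nonempty ht fun x hx =>
        mul_lt_mul_of_pos_left (hg x hx) (hw x hx)
    rwa [← Finset.sum_mul, hw1, one_mul] at this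
  have combo_le : ∀ (t : Finset (Fin d → ℝ)) (w : (Fin d → ℝ) → ℝ) (g : (Fin d → ℝ) → ℝ)
      (r : ℝ), (∀ x ∈ t, 0 < w x) → (∑ x ∈ t, w x = 1) →
      (∀ x ∈ t, g x ≤ r) → ∑ x ∈ t, w x * g x ≤ r := by
    intro t w g r hw hw1 hg
    have : ∑ x ∈ t, w x * g x ≤ ∑ x ∈ t, w x * r :=
      Finset.sum_le_sum fun x hx => mul_le_mul_of_nonneg_left (hg x hx) (hw x hx).le
    rwa [← Finset.sum_mul, hw1, one_mul] at this
  -- Radon partitions of A and B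
  obtain ⟨s₁, s₂, w₁, w₂, z, hs₁A, hs₂A, hdisjA, hs₁ne, hs₂ne, hw₁pos, hw₂pos, hw₁sum, hw₂sum,
    hz₁, hz₂⟩ := radon_data A (by omega)
  obtain ⟨t₁, t₂, v₁, v₂, y, ht₁B, ht₂B, hdisjB, ht₁ne, ht₂ne, hv₁pos, hv₂pos, hv₁sum, hv₂sum,
    hy₁, hy₂⟩ := radon_data B (by omega)
  set σ₁ := ∑ x ∈ s₁, w₁ x * (∑ i, (x i - z i) ^ 2) with hσ₁def
  set σ₂ := ∑ x ∈ s₂, w₂ x * (∑ i, (x i - z i) ^ 2) with hσ₂def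
  set τ₁ := ∑ x ∈ t₁, v₁ x * (∑ i, (x i - y i) ^ 2) with hτ₁def
  set τ₂ := ∑ x ∈ t₂, v₂ x * (∑ i, (x i - y i) ^ 2) with hτ₂def
  have idA1 : ∀ q : Fin d → ℝ, ∑ x ∈ s₁, w₁ x * (∑ i, (x i - q i) ^ 2)
      = (∑ i, (z i - q i) ^ 2) + σ₁ := fun q => key_identity s₁ w₁ hw₁sum z q hz₁
  have idA2 : ∀ q : Fin d → ℝ, ∑ x ∈ s₂, w₂ x * (∑ i, (x i - q i) ^ 2)
      = (∑ i, (z i - q i) ^ 2) + σ₂ := fun q => key_identity s₂ w₂ hw₂sum z q hz₂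
  have idB1 : ∀ q : Fin d → ℝ, ∑ x ∈ t₁, v₁ x * (∑ i, (x i - q i) ^ 2)
      = (∑ i, (y i - q i) ^ 2) + τ₁ := fun q => key_identity t₁ v₁ hv₁sum y q hy₁
  have idB2 : ∀ q : Fin d → ℝ, ∑ x ∈ t₂, v₂ x * (∑ i, (x i - q i) ^ 2)
      = (∑ i, (y i - q i) ^ 2) + τ₂ := fun q => key_identity t₂ v₂ hv₂sum y q hy₂
  -- inner lower bounds: σ₁ + σ₂ > α², τ₁ + τ₂ > α²
  have neAs : ∀ x ∈ s₁, ∀ q ∈ s₂, x ≠ q := fun x hx q hq h =>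
    Finset.disjoint_left.mp hdisjA hx (h ▸ hq)
  have neBs : ∀ x ∈ t₁, ∀ q ∈ t₂, x ≠ q := fun x hx q hq h =>
    Finset.disjoint_left.mp hdisjB hx (h ▸ hq)
  have hzq : ∀ q ∈ s₂, α ^ 2 - σ₁ < ∑ i, (z i - q i) ^ 2 := by
    intro q hq
    have h : α ^ 2 < ∑ x ∈ s₁, w₁ x * (∑ i, (x i - q i) ^ 2) :=
      combo_lt s₁ w₁ _ _ hw₁pos hw₁sum hs₁ne fun x hx =>
        hAA' x (hs₁A hx) q (hs₂A hq) (neAs x hx q hq)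
    rw [idA1 q] at h
    linarith
  have hσ : α ^ 2 - σ₁ < σ₂ := by
    have h : α ^ 2 - σ₁ < ∑ q ∈ s₂, w₂ q * (∑ i, (q i - z i) ^ 2) :=
      combo_lt s₂ w₂ _ _ hw₂pos hw₂sum hs₂ne fun q hq => by
        rw [sum_sq_symm']; exact hzq q hq
    exact lt_of_lt_of_le h (le_of_eq rfl)
  have hyq : ∀ q ∈ t₂, α ^ 2 - τ₁ < ∑ i, (y i - q i) ^ 2 := by
    intro q hq
    have h : α ^ 2 < ∑ x ∈ t₁, v₁ x * (∑ i, (x i - q i) ^ 2) :=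
      combo_lt t₁ v₁ _ _ hv₁pos hv₁sum ht₁ne fun x hx =>
        hBB' x (ht₁B hx) q (ht₂B hq) (neBs x hx q hq)
    rw [idB1 q] at h
    linarith
  have hτ : α ^ 2 - τ₁ < τ₂ := by
    have h : α ^ 2 - τ₁ < ∑ q ∈ t₂, v₂ q * (∑ i, (q i - y i) ^ 2) :=
      combo_lt t₂ v₂ _ _ hv₂pos hv₂sum ht₂ne fun q hq => by
        rw [sum_sq_symm']; exact hyq q hq
    exact lt_of_lt_of_le h (le_of_eq rfl)
  -- cross upper bounds
  have hzb₁ : ∀ b ∈ B, ∑ i, (z i - b i) ^ 2 ≤ β ^ 2 - σ₁ := by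
    intro b hb
    have h : ∑ x ∈ s₁, w₁ x * (∑ i, (x i - b i) ^ 2) ≤ β ^ 2 :=
      combo_le s₁ w₁ _ _ hw₁pos hw₁sum fun x hx => hAB' x (hs₁A hx) b hb
    rw [idA1 b] at h
    linarith
  have hzb₂ : ∀ b ∈ B, ∑ i, (z i - b i) ^ 2 ≤ β ^ 2 - σ₂ := by
    intro b hb
    have h : ∑ x ∈ s₂, w₂ x * (∑ i, (x i - b i) ^ 2) ≤ β ^ 2 :=
      combo_le s₂ w₂ _ _ hw₂pos hw₂sum fun x hx => hAB' x (hs₂A hx) b hb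
    rw [idA2 b] at h
    linarith
  have hyz₁ : (∑ i, (y i - z i) ^ 2) + τ₁ ≤ β ^ 2 - σ₁ := by
    have h : ∑ b ∈ t₁, v₁ b * (∑ i, (b i - z i) ^ 2) ≤ β ^ 2 - σ₁ :=
      combo_le t₁ v₁ _ _ hv₁pos hv₁sum fun b hb => by
        rw [sum_sq_symm']; exact hzb₁ b (ht₁B hb)
    rw [idB1 z] at h
    exact h
  have hyz₂ : (∑ i, (y i - z i) ^ 2) + τ₂ ≤ β ^ 2 - σ₂ := by
    have h : ∑ b ∈ t₂, v₂ b * (∑ i, (b i - z i) ^ 2) ≤ β ^ 2 - σ₂ :=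
      combo_le t₂ v₂ _ _ hv₂pos hv₂sum fun b hb => by
        rw [sum_sq_symm']; exact hzb₂ b (ht₂B hb)
    rw [idB2 z] at h
    exact h
  have hyz0 : 0 ≤ ∑ i, (y i - z i) ^ 2 := sum_sq_nonneg' y z
  have hβα : β ^ 2 < α ^ 2 := by nlinarith
  linarith
end
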